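/- arXiv:2203.11923 — 4 statements merged into one kernel-verified Lean document; each statement's English description precedes it below -/
import Mathlib

section
/- Let M ∈ ℕ with M ≥ 1, let ℓ ≥ 1, let Δ > 0, τ > 0, and let h_1, …, h_ℓ ∈ ℝ with |h_i| ≤ τΔ for all i. Let A_1, …, A_ℓ ∈ ℂ and define, with D_M(ω) := Σ_{m=0}^{M} e^{2πi m ω}, the function R_A(ω) := (1/(2ℓ−1)!) · Σ_{i=1}^{ℓ} A_i ∫₀¹ D_M^{(2ℓ)}(ω + h_i r) (h_i − h_i r)^{2ℓ−1} h_i dr. Then ‖R_A‖_{L²(0,1)} ≤ (τΔ)^{2ℓ} · √(M+1) · (2πM)^{2ℓ} · (1/(2ℓ−1)!) · Σ_{i=1}^{ℓ} |A_i|. -/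
open scoped BigOperators

/-- The modified Dirichlet kernel `D_M(ω) = Σ_{m=0}^{M} e^{2πi m ω}`. -/
noncomputable def DirichletKer (M : ℕ) : ℝ → ℂ :=
  fun ω => ∑ m ∈ Finset.range (M + 1),
    Complex.exp (2 * (Real.pi : ℂ) * Complex.I * (m : ℂ) * (ω : ℂ))

/-- The Taylor remainder term
`R_A(ω) = (1/(2ℓ-1)!) Σ_i A_i ∫₀¹ D_M^{(2ℓ)}(ω + h_i r) (h_i - h_i r)^{2ℓ-1} h_i dr`. -/
noncomputable def RAterm (M ℓ : ℕ) (h : Fin ℓ → ℝ) (A : Fin ℓ → ℂ) (ω : ℝ) : ℂ :=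
  (1 / ((2 * ℓ - 1).factorial : ℂ)) * ∑ i, A i *
    ∫ r in (0 : ℝ)..1,
      iteratedDeriv (2 * ℓ) (DirichletKer M) (ω + h i * r) *
        ((h i - h i * r : ℝ) : ℂ) ^ (2 * ℓ - 1) * ((h i : ℝ) : ℂ)

namespace RAaux

open Complex intervalIntegral

lemma hasDerivAt_cexp_mul (c : ℂ) (x : ℝ) :
    HasDerivAt (fun y : ℝ => Complex.exp (c * y)) (c * Complex.exp (c * x)) x := by
  have h1 : HasDerivAt (fun z : ℂ => Complex.exp (c * z)) (c * Complex.exp (c * (x : ℂ))) (x : ℂ) := by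
    simpa [mul_comm, Function.comp_def] using
      (Complex.hasDerivAt_exp (c * (x:ℂ))).comp (x:ℂ) ((hasDerivAt_id (x:ℂ)).const_mul c)
  exact h1.comp_ofReal

lemma iteratedDeriv_sum_cexp (s : Finset ℕ) (c : ℕ → ℂ) (n : ℕ) :
    iteratedDeriv n (fun y : ℝ => ∑ m ∈ s, Complex.exp (c m * y)) =
      fun y : ℝ => ∑ m ∈ s, (c m) ^ n * Complex.exp (c m * y) := by
  induction n with
  | zero => simp [iteratedDeriv_zero]
  | succ n ih =>
    rw [iteratedDeriv_succ, ih]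
    funext x
    have hd : HasDerivAt (fun y : ℝ => ∑ m ∈ s, (c m) ^ n * Complex.exp (c m * y))
        (∑ m ∈ s, (c m) ^ n * (c m * Complex.exp (c m * x))) x :=
      HasDerivAt.fun_sum fun m _ => (hasDerivAt_cexp_mul (c m) x).const_mul _
    rw [hd.deriv]
    exact Finset.sum_congr rfl fun m _ => by ring

lemma DirichletKer_eq (M : ℕ) : DirichletKer M =
    fun ω : ℝ => ∑ m ∈ Finset.range (M + 1),
      Complex.exp ((2 * (Real.pi : ℂ) * Complex.I * m) * (ω : ℂ)) := rfl

lemma iteratedDeriv_DirichletKer (M n : ℕ) :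
    iteratedDeriv n (DirichletKer M) = fun ω : ℝ => ∑ m ∈ Finset.range (M + 1),
      (2 * (Real.pi : ℂ) * Complex.I * m) ^ n *
        Complex.exp ((2 * (Real.pi : ℂ) * Complex.I * m) * (ω : ℂ)) := by
  rw [DirichletKer_eq, iteratedDeriv_sum_cexp]

lemma orth (m n : ℕ) :
    (∫ ω in (0:ℝ)..1, Complex.exp ((2 * (Real.pi : ℂ) * Complex.I * m) * (ω : ℂ)) *
      (starRingEnd ℂ) (Complex.exp ((2 * (Real.pi : ℂ) * Complex.I * n) * (ω : ℂ))))
      = if m = n then 1 else 0 := by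
  have key : ∀ ω : ℝ, Complex.exp ((2 * (Real.pi : ℂ) * Complex.I * m) * (ω : ℂ)) *
      (starRingEnd ℂ) (Complex.exp ((2 * (Real.pi : ℂ) * Complex.I * n) * (ω : ℂ)))
      = Complex.exp ((2 * (Real.pi : ℂ) * Complex.I * ((m : ℂ) - (n : ℂ))) * (ω : ℂ)) := by
    intro ω
    rw [← Complex.exp_conj, ← Complex.exp_add]
    congr 1
    simp only [map_mul, map_ofNat, Complex.conj_I, Complex.conj_natCast, Complex.conj_ofReal]
    ring
  simp only [key]
  rcases eq_or_ne m n with rfl | hmn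
  · simp
  · have hc : (2 * (Real.pi : ℂ) * Complex.I * ((m : ℂ) - (n : ℂ))) ≠ 0 := by
      have : ((m : ℂ) - n) ≠ 0 := by
        simpa [sub_eq_zero] using hmn
      simp [Real.pi_ne_zero, Complex.I_ne_zero, this, Complex.ofReal_ne_zero]
    rw [if_neg hmn, integral_exp_mul_complex hc]
    have h1 : Complex.exp (2 * (Real.pi : ℂ) * Complex.I * ((m : ℂ) - (n : ℂ)) * (1:ℝ)) = 1 := by
      have : (2 * (Real.pi : ℂ) * Complex.I * ((m : ℂ) - (n : ℂ)) * (1:ℝ))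
          = ((((m : ℤ) - (n : ℤ) : ℤ)) : ℂ) * (2 * (Real.pi : ℂ) * Complex.I) := by push_cast; ring
      rw [this, Complex.exp_int_mul_two_pi_mul_I]
    rw [h1]
    simp

lemma cont_e (c : ℂ) : Continuous fun ω : ℝ => Complex.exp (c * (ω : ℂ)) :=
  Complex.continuous_exp.comp (continuous_const.mul Complex.continuous_ofReal)

lemma parseval (M : ℕ) (c : ℕ → ℂ) :
    (∫ ω in (0:ℝ)..1, ‖∑ m ∈ Finset.range (M + 1),
        c m * Complex.exp ((2 * (Real.pi : ℂ) * Complex.I * m) * (ω : ℂ))‖ ^ 2)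
      = ∑ m ∈ Finset.range (M + 1), ‖c m‖ ^ 2 := by
  set e : ℕ → ℝ → ℂ := fun m ω => Complex.exp ((2 * (Real.pi : ℂ) * Complex.I * m) * (ω : ℂ))
    with he
  set g : ℝ → ℂ := fun ω => ∑ m ∈ Finset.range (M + 1), c m * e m ω with hg
  have hcontg : Continuous g := by
    apply continuous_finset_sum
    exact fun m _ => continuous_const.mul (cont_e _)
  have hnorm : ∀ ω : ℝ, ‖g ω‖ ^ 2 = (g ω * (starRingEnd ℂ) (g ω)).re := by
    intro ω
    rw [Complex.mul_conj]
    simp [Complex.normSq_eq_norm_sq, ← Complex.ofReal_pow]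
  have hint : IntervalIntegrable (fun ω : ℝ => g ω * (starRingEnd ℂ) (g ω)) MeasureTheory.volume 0 1 :=
    (hcontg.mul (Complex.continuous_conj.comp hcontg)).intervalIntegrable 0 1
  have step1 : (∫ ω in (0:ℝ)..1, ‖g ω‖ ^ 2)
      = (∫ ω in (0:ℝ)..1, g ω * (starRingEnd ℂ) (g ω)).re := by
    simp only [hnorm]
    rw [← Complex.reCLM_apply, ← ContinuousLinearMap.intervalIntegral_comp_comm _ hint]
    rfl
  have step2 : (∫ ω in (0:ℝ)..1, g ω * (starRingEnd ℂ) (g ω))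
      = ∑ m ∈ Finset.range (M + 1), c m * (starRingEnd ℂ) (c m) := by
    have expand : ∀ ω : ℝ, g ω * (starRingEnd ℂ) (g ω)
        = ∑ m ∈ Finset.range (M + 1), ∑ n ∈ Finset.range (M + 1),
            (c m * (starRingEnd ℂ) (c n)) * (e m ω * (starRingEnd ℂ) (e n ω)) := by
      intro ω
      rw [hg]
      simp only [map_sum, map_mul]
      rw [Finset.sum_mul_sum]
      exact Finset.sum_congr rfl fun m _ => Finset.sum_congr rfl fun n _ => by ring
    simp only [expand]
    rw [intervalIntegral.integral_finset_sum]
    · have inner : ∀ m ∈ Finset.range (M + 1),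
          (∫ ω in (0:ℝ)..1, ∑ n ∈ Finset.range (M + 1),
            (c m * (starRingEnd ℂ) (c n)) * (e m ω * (starRingEnd ℂ) (e n ω)))
          = c m * (starRingEnd ℂ) (c m) := by
        intro m hm
        rw [intervalIntegral.integral_finset_sum]
        · have term : ∀ n ∈ Finset.range (M + 1),
              (∫ ω in (0:ℝ)..1, (c m * (starRingEnd ℂ) (c n)) * (e m ω * (starRingEnd ℂ) (e n ω)))
              = (c m * (starRingEnd ℂ) (c n)) * (if m = n then 1 else 0) := by
            intro n _
            rw [intervalIntegral.integral_const_mul, orth m n]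
          rw [Finset.sum_congr rfl term]
          simp only [mul_ite, mul_one, mul_zero]
          rw [Finset.sum_ite_eq (Finset.range (M + 1)) m (fun n => c m * (starRingEnd ℂ) (c n))]
          simp [hm]
        · intro n _
          exact (continuous_const.mul ((cont_e _).mul (Complex.continuous_conj.comp (cont_e _)))).intervalIntegrable 0 1
      exact Finset.sum_congr rfl inner
    · intro m _
      apply Continuous.intervalIntegrable
      apply continuous_finset_sum
      exact fun n _ => continuous_const.mul ((cont_e _).mul (Complex.continuous_conj.comp (cont_e _)))
  rw [step1, step2, Complex.re_sum]
  exact Finset.sum_congr rfl fun m _ => by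
    rw [Complex.mul_conj]; simp [Complex.normSq_eq_norm_sq, ← Complex.ofReal_pow]

/-- The inner integral over `r`. -/
noncomputable def Jint (ℓ : ℕ) (h : Fin ℓ → ℝ) (i : Fin ℓ) (m : ℕ) : ℂ :=
  ∫ r in (0:ℝ)..1, Complex.exp ((2 * (Real.pi : ℂ) * Complex.I * m) * ((h i * r : ℝ) : ℂ)) *
    ((h i - h i * r : ℝ) : ℂ) ^ (2 * ℓ - 1) * ((h i : ℝ) : ℂ)

lemma cont_Jint_integrand (ℓ : ℕ) (h : Fin ℓ → ℝ) (i : Fin ℓ) (m : ℕ) :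
    Continuous fun r : ℝ =>
      Complex.exp ((2 * (Real.pi : ℂ) * Complex.I * m) * ((h i * r : ℝ) : ℂ)) *
        ((h i - h i * r : ℝ) : ℂ) ^ (2 * ℓ - 1) * ((h i : ℝ) : ℂ) := by
  apply Continuous.mul _ continuous_const
  apply Continuous.mul
  · exact (cont_e _).comp (continuous_const.mul continuous_id)
  · exact (Complex.continuous_ofReal.comp (continuous_const.sub (continuous_const.mul continuous_id))).pow _

lemma RAterm_repr (M ℓ : ℕ) (h : Fin ℓ → ℝ) (A : Fin ℓ → ℂ) :
    RAterm M ℓ h A = fun ω : ℝ => ∑ m ∈ Finset.range (M + 1),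
      ((1 / ((2 * ℓ - 1).factorial : ℂ)) *
          ((2 * (Real.pi : ℂ) * Complex.I * m) ^ (2 * ℓ) * ∑ i, A i * Jint ℓ h i m)) *
        Complex.exp ((2 * (Real.pi : ℂ) * Complex.I * m) * (ω : ℂ)) := by
  funext ω
  have inner : ∀ i : Fin ℓ,
      (∫ r in (0:ℝ)..1, iteratedDeriv (2 * ℓ) (DirichletKer M) (ω + h i * r) *
          ((h i - h i * r : ℝ) : ℂ) ^ (2 * ℓ - 1) * ((h i : ℝ) : ℂ))
      = ∑ m ∈ Finset.range (M + 1),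
          ((2 * (Real.pi : ℂ) * Complex.I * m) ^ (2 * ℓ) *
            Complex.exp ((2 * (Real.pi : ℂ) * Complex.I * m) * (ω : ℂ))) * Jint ℓ h i m := by
    intro i
    simp only [iteratedDeriv_DirichletKer]
    rw [intervalIntegral.integral_congr
      (g := fun r : ℝ => ∑ m ∈ Finset.range (M + 1),
        ((2 * (Real.pi : ℂ) * Complex.I * m) ^ (2 * ℓ) *
            Complex.exp ((2 * (Real.pi : ℂ) * Complex.I * m) * (ω : ℂ))) *
          (Complex.exp ((2 * (Real.pi : ℂ) * Complex.I * m) * ((h i * r : ℝ) : ℂ)) *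
            ((h i - h i * r : ℝ) : ℂ) ^ (2 * ℓ - 1) * ((h i : ℝ) : ℂ)))]
    · rw [intervalIntegral.integral_finset_sum]
      · exact Finset.sum_congr rfl fun m _ => intervalIntegral.integral_const_mul _ _
      · intro m _
        exact (continuous_const.mul (cont_Jint_integrand ℓ h i m)).intervalIntegrable 0 1
    · intro r _
      simp only [Finset.sum_mul]
      refine Finset.sum_congr rfl fun m _ => ?_
      have hsplit : Complex.exp ((2 * (Real.pi : ℂ) * Complex.I * m) * ((ω + h i * r : ℝ) : ℂ))
          = Complex.exp ((2 * (Real.pi : ℂ) * Complex.I * m) * (ω : ℂ)) *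
            Complex.exp ((2 * (Real.pi : ℂ) * Complex.I * m) * ((h i * r : ℝ) : ℂ)) := by
        rw [← Complex.exp_add]
        congr 1
        push_cast
        ring
      rw [hsplit]
      ring
  unfold RAterm
  simp only [inner]
  simp only [Finset.mul_sum]
  rw [Finset.sum_comm]
  refine Finset.sum_congr rfl fun m _ => ?_
  rw [Finset.sum_mul]
  exact Finset.sum_congr rfl fun i _ => by ring

end RAaux

/-- Lemma (bound on the remainder `R_A`):
`‖R_A‖_{L²(0,1)} ≤ (τΔ)^{2ℓ} √(M+1) (2πM)^{2ℓ} (1/(2ℓ-1)!) Σ_i |A_i|`. -/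
theorem RA_L2_bound (M ℓ : ℕ) (hM : 1 ≤ M) (hℓ : 1 ≤ ℓ) (Δ τ : ℝ) (hΔ : 0 < Δ) (hτ : 0 < τ)
    (h : Fin ℓ → ℝ) (hh : ∀ i, |h i| ≤ τ * Δ) (A : Fin ℓ → ℂ) :
    Real.sqrt (∫ ω in (0 : ℝ)..1, ‖RAterm M ℓ h A ω‖ ^ 2) ≤
      (τ * Δ) ^ (2 * ℓ) * Real.sqrt ((M : ℝ) + 1) * (2 * Real.pi * M) ^ (2 * ℓ) *
        (1 / ((2 * ℓ - 1).factorial : ℝ)) * ∑ i, ‖A i‖ := by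
  classical
  have hτΔ : (0:ℝ) ≤ τ * Δ := le_of_lt (mul_pos hτ hΔ)
  set c : ℕ → ℂ := fun m =>
    (1 / ((2 * ℓ - 1).factorial : ℂ)) *
      ((2 * (Real.pi : ℂ) * Complex.I * m) ^ (2 * ℓ) * ∑ i, A i * RAaux.Jint ℓ h i m) with hc
  have hrepr := RAaux.RAterm_repr M ℓ h A
  simp only [hrepr]
  rw [RAaux.parseval M c]
  set B : ℝ := (τ * Δ) ^ (2 * ℓ) * ((2 * Real.pi * M) ^ (2 * ℓ) *
    ((1 / ((2 * ℓ - 1).factorial : ℝ)) * ∑ i, ‖A i‖)) with hBdef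
  have hB0 : 0 ≤ B := by
    apply mul_nonneg (pow_nonneg hτΔ _)
    apply mul_nonneg (pow_nonneg (by positivity) _)
    exact mul_nonneg (by positivity) (Finset.sum_nonneg fun i _ => norm_nonneg _)
  -- bound on each coefficient
  have hcm : ∀ m ∈ Finset.range (M + 1), ‖c m‖ ≤ B := by
    intro m hm
    have hmM : (m : ℝ) ≤ (M : ℝ) := by
      exact_mod_cast Nat.lt_succ_iff.mp (Finset.mem_range.mp hm)
    have hJ : ∀ i : Fin ℓ, ‖RAaux.Jint ℓ h i m‖ ≤ (τ * Δ) ^ (2 * ℓ) := by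
      intro i
      have hbound : ∀ r ∈ Set.uIoc (0:ℝ) 1,
          ‖Complex.exp ((2 * (Real.pi : ℂ) * Complex.I * m) * ((h i * r : ℝ) : ℂ)) *
            ((h i - h i * r : ℝ) : ℂ) ^ (2 * ℓ - 1) * ((h i : ℝ) : ℂ)‖ ≤ (τ * Δ) ^ (2 * ℓ) := by
        intro r hr
        rw [Set.uIoc_of_le (zero_le_one)] at hr
        obtain ⟨hr0, hr1⟩ := hr
        have hexp : ‖Complex.exp ((2 * (Real.pi : ℂ) * Complex.I * m) * ((h i * r : ℝ) : ℂ))‖ = 1 := by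
          have : (2 * (Real.pi : ℂ) * Complex.I * m) * ((h i * r : ℝ) : ℂ)
              = ((2 * Real.pi * m * (h i * r) : ℝ) : ℂ) * Complex.I := by push_cast; ring
          rw [this, Complex.norm_exp_ofReal_mul_I]
        rw [norm_mul, norm_mul, hexp, one_mul, norm_pow, Complex.norm_real, Complex.norm_real,
          Real.norm_eq_abs, Real.norm_eq_abs]
        have habs : |h i - h i * r| ≤ τ * Δ := by
          have : h i - h i * r = h i * (1 - r) := by ring
          rw [this, abs_mul]
          have h1r : |1 - r| ≤ 1 := by rw [abs_of_nonneg (by linarith)]; linarith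
          calc |h i| * |1 - r| ≤ (τ * Δ) * 1 :=
                mul_le_mul (hh i) h1r (abs_nonneg _) hτΔ
            _ = τ * Δ := mul_one _
        calc |h i - h i * r| ^ (2 * ℓ - 1) * |h i|
            ≤ (τ * Δ) ^ (2 * ℓ - 1) * (τ * Δ) := by
              apply mul_le_mul (pow_le_pow_left₀ (abs_nonneg _) habs _) (hh i) (abs_nonneg _)
                (pow_nonneg hτΔ _)
          _ = (τ * Δ) ^ (2 * ℓ) := by
              rw [← pow_succ]
              congr 1
              omega
      unfold RAaux.Jint
      calc ‖∫ r in (0:ℝ)..1, Complex.exp ((2 * (Real.pi : ℂ) * Complex.I * m) * ((h i * r : ℝ) : ℂ)) *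
            ((h i - h i * r : ℝ) : ℂ) ^ (2 * ℓ - 1) * ((h i : ℝ) : ℂ)‖
          ≤ (τ * Δ) ^ (2 * ℓ) * |(1:ℝ) - 0| :=
            intervalIntegral.norm_integral_le_of_norm_le_const hbound
        _ = (τ * Δ) ^ (2 * ℓ) := by norm_num
    have hsum : ‖∑ i, A i * RAaux.Jint ℓ h i m‖ ≤ (τ * Δ) ^ (2 * ℓ) * ∑ i, ‖A i‖ := by
      calc ‖∑ i, A i * RAaux.Jint ℓ h i m‖ ≤ ∑ i, ‖A i * RAaux.Jint ℓ h i m‖ :=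
            norm_sum_le _ _
        _ ≤ ∑ i, ‖A i‖ * (τ * Δ) ^ (2 * ℓ) := by
            apply Finset.sum_le_sum
            intro i _
            rw [norm_mul]
            exact mul_le_mul_of_nonneg_left (hJ i) (norm_nonneg _)
        _ = (τ * Δ) ^ (2 * ℓ) * ∑ i, ‖A i‖ := by rw [← Finset.sum_mul]; ring
    have hem : ‖(2 * (Real.pi : ℂ) * Complex.I * (m : ℂ))‖ = 2 * Real.pi * m := by
      simp only [norm_mul, Complex.norm_I, Complex.norm_natCast,
        Complex.norm_two, Complex.norm_real, Real.norm_eq_abs, abs_of_pos Real.pi_pos, mul_one]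
    have hemM : ‖(2 * (Real.pi : ℂ) * Complex.I * (m : ℂ))‖ ^ (2 * ℓ) ≤ (2 * Real.pi * M) ^ (2 * ℓ) := by
      rw [hem]
      apply pow_le_pow_left₀ (by positivity)
      have : (0:ℝ) ≤ 2 * Real.pi := by positivity
      nlinarith [Real.pi_pos]
    have hfac : ‖(1 / ((2 * ℓ - 1).factorial : ℂ))‖ = 1 / ((2 * ℓ - 1).factorial : ℝ) := by
      rw [norm_div, norm_one, Complex.norm_natCast]
    rw [hc]
    rw [norm_mul, norm_mul, norm_pow, hfac]
    rw [hBdef]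
    have hfpos : (0:ℝ) ≤ 1 / ((2 * ℓ - 1).factorial : ℝ) := by positivity
    calc 1 / ((2 * ℓ - 1).factorial : ℝ) *
          (‖(2 * (Real.pi : ℂ) * Complex.I * (m : ℂ))‖ ^ (2 * ℓ) * ‖∑ i, A i * RAaux.Jint ℓ h i m‖)
        ≤ 1 / ((2 * ℓ - 1).factorial : ℝ) *
          ((2 * Real.pi * M) ^ (2 * ℓ) * ((τ * Δ) ^ (2 * ℓ) * ∑ i, ‖A i‖)) := by
          apply mul_le_mul_of_nonneg_left _ hfpos
          apply mul_le_mul hemM hsum (norm_nonneg _) (by positivity)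
      _ = (τ * Δ) ^ (2 * ℓ) * ((2 * Real.pi * M) ^ (2 * ℓ) *
          (1 / ((2 * ℓ - 1).factorial : ℝ) * ∑ i, ‖A i‖)) := by ring
  have hsum2 : (∑ m ∈ Finset.range (M + 1), ‖c m‖ ^ 2) ≤ ((M : ℝ) + 1) * B ^ 2 := by
    calc (∑ m ∈ Finset.range (M + 1), ‖c m‖ ^ 2) ≤ ∑ _m ∈ Finset.range (M + 1), B ^ 2 :=
          Finset.sum_le_sum fun m hm => pow_le_pow_left₀ (norm_nonneg _) (hcm m hm) 2
      _ = ((M : ℝ) + 1) * B ^ 2 := by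
          rw [Finset.sum_const, Finset.card_range, nsmul_eq_mul]
          push_cast
          ring
  calc Real.sqrt (∑ m ∈ Finset.range (M + 1), ‖c m‖ ^ 2)
      ≤ Real.sqrt (((M : ℝ) + 1) * B ^ 2) := Real.sqrt_le_sqrt hsum2
    _ = Real.sqrt ((M : ℝ) + 1) * B := by
        rw [Real.sqrt_mul (by positivity), Real.sqrt_sq hB0]
    _ = (τ * Δ) ^ (2 * ℓ) * Real.sqrt ((M : ℝ) + 1) * (2 * Real.pi * M) ^ (2 * ℓ) *
        (1 / ((2 * ℓ - 1).factorial : ℝ)) * ∑ i, ‖A i‖ := by rw [hBdef]; ring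
end

section
/- Let M ∈ ℕ with M ≥ 1, let ℓ ≥ 2, let Δ > 0, τ > 0, and let h_1, …, h_ℓ ∈ ℝ with |h_i| ≤ τΔ for all i. Let B_1, …, B_ℓ ∈ ℂ and define, with D_M(ω) := Σ_{m=0}^{M} e^{2πi m ω}, the function R_B(ω) := (1/(2ℓ−2)!) · Σ_{i=1}^{ℓ} B_i ∫₀¹ D_M^{(2ℓ)}(ω + h_i r) (h_i − h_i r)^{2ℓ−2} h_i dr. Then ‖R_B‖_{L²(0,1)} ≤ (τΔ)^{2ℓ−1} · √(M+1) · (2πM)^{2ℓ} · (1/(2ℓ−1)!) · Σ_{i=1}^{ℓ} |B_i|. -/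
open scoped BigOperators
open Complex intervalIntegral

/-- The Taylor remainder term
`R_B(ω) = (1/(2ℓ-2)!) Σ_i B_i ∫₀¹ D_M^{(2ℓ)}(ω + h_i r) (h_i - h_i r)^{2ℓ-2} h_i dr`. -/
noncomputable def RBterm (M ℓ : ℕ) (h : Fin ℓ → ℝ) (B : Fin ℓ → ℂ) (ω : ℝ) : ℂ :=
  (1 / ((2 * ℓ - 2).factorial : ℂ)) * ∑ i, B i *
    ∫ r in (0 : ℝ)..1,
      iteratedDeriv (2 * ℓ) (DirichletKer M) (ω + h i * r) *
        ((h i - h i * r : ℝ) : ℂ) ^ (2 * ℓ - 2) * ((h i : ℝ) : ℂ)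

noncomputable def cc (m : ℕ) : ℂ := 2 * (Real.pi : ℂ) * Complex.I * m

lemma hasDerivAt_cexp_mul (c : ℂ) (x : ℝ) :
    HasDerivAt (fun y : ℝ => Complex.exp (c * y)) (c * Complex.exp (c * x)) x := by
  have h1 : HasDerivAt (fun z : ℂ => Complex.exp (c * z)) (Complex.exp (c * x) * c) (x : ℂ) :=
    by simpa using ((hasDerivAt_id (x : ℂ)).const_mul c).cexp
  simpa [mul_comm] using h1.comp_ofReal

lemma iteratedDeriv_dirichlet (M n : ℕ) :
    iteratedDeriv n (DirichletKer M)
      = fun x : ℝ => ∑ m ∈ Finset.range (M + 1), (cc m) ^ n * Complex.exp (cc m * x) := by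
  induction n with
  | zero =>
    funext x
    simp [DirichletKer, cc, mul_assoc]
  | succ n ih =>
    rw [iteratedDeriv_succ, ih]
    funext x
    have hd : HasDerivAt (fun x : ℝ => ∑ m ∈ Finset.range (M + 1), (cc m) ^ n * Complex.exp (cc m * x))
        (∑ m ∈ Finset.range (M + 1), (cc m) ^ (n + 1) * Complex.exp (cc m * x)) x := by
      refine HasDerivAt.fun_sum fun m _ => ?_
      have := (hasDerivAt_cexp_mul (cc m) x).const_mul ((cc m) ^ n)
      exact this.congr_deriv (by ring)
    exact hd.deriv

lemma orth (m k : ℕ) :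
    (∫ ω in (0:ℝ)..1, Complex.exp (cc m * ω) * (starRingEnd ℂ) (Complex.exp (cc k * ω)))
      = if m = k then 1 else 0 := by
  have hconj : ∀ ω : ℝ, (starRingEnd ℂ) (Complex.exp (cc k * ω)) = Complex.exp (-(cc k) * ω) := by
    intro ω
    rw [← Complex.exp_conj]
    congr 1
    simp only [cc, map_mul, Complex.conj_I, Complex.conj_ofReal, map_ofNat, map_natCast]
    ring
  have hcomb : ∀ ω : ℝ, Complex.exp (cc m * ω) * Complex.exp (-(cc k) * ω)
      = Complex.exp ((cc m - cc k) * ω) := by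
    intro ω
    rw [← Complex.exp_add]
    congr 1
    ring
  simp only [hconj, hcomb]
  by_cases hmk : m = k
  · subst hmk
    simp
  · rw [if_neg hmk]
    have hne : cc m - cc k ≠ 0 := by
      simp only [cc]
      intro hcon
      apply hmk
      have h2 : (2 * (Real.pi : ℂ) * Complex.I) * ((m : ℂ) - k) = 0 := by ring_nf; ring_nf at hcon; linear_combination hcon
      have hπ : (2 * (Real.pi : ℂ) * Complex.I) ≠ 0 := by
        simp [Real.pi_ne_zero, Complex.I_ne_zero, Complex.ofReal_ne_zero]
      have hmk2 := (mul_eq_zero.1 h2).resolve_left hπ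
      have : (m : ℂ) = k := sub_eq_zero.1 hmk2
      exact_mod_cast this
    rw [integral_exp_mul_complex hne]
    have hone : Complex.exp ((cc m - cc k) * (1:ℝ)) = 1 := by
      have : (cc m - cc k) * (1:ℝ) = ((m : ℤ) - (k : ℤ)) * (2 * (Real.pi:ℂ) * Complex.I) := by
        simp [cc]; push_cast; ring
      rw [this]
      exact_mod_cast Complex.exp_int_mul_two_pi_mul_I ((m : ℤ) - k)
    rw [hone]
    norm_num

lemma cont_E (m : ℕ) : Continuous (fun ω : ℝ => Complex.exp (cc m * ω)) := by fun_prop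

lemma parseval_fin (N : ℕ) (a : ℕ → ℂ) :
    (∫ ω in (0:ℝ)..1, ‖∑ m ∈ Finset.range N, a m * Complex.exp (cc m * ω)‖ ^ 2)
      = ∑ m ∈ Finset.range N, ‖a m‖ ^ 2 := by
  set f : ℝ → ℂ := fun ω => ∑ m ∈ Finset.range N, a m * Complex.exp (cc m * ω) with hf
  have hfc : Continuous f := by
    apply continuous_finset_sum
    intro m _
    exact continuous_const.mul (cont_E m)
  -- complex integral of f * conj f
  have hkey : (∫ ω in (0:ℝ)..1, f ω * (starRingEnd ℂ) (f ω))
      = ((∑ m ∈ Finset.range N, ‖a m‖ ^ 2 : ℝ) : ℂ) := by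
    have hexp : ∀ ω : ℝ, f ω * (starRingEnd ℂ) (f ω)
        = ∑ m ∈ Finset.range N, ∑ k ∈ Finset.range N,
            (a m * (starRingEnd ℂ) (a k)) *
              (Complex.exp (cc m * ω) * (starRingEnd ℂ) (Complex.exp (cc k * ω))) := by
      intro ω
      rw [hf]
      simp only [map_sum, map_mul, Finset.sum_mul_sum]
      refine Finset.sum_congr rfl fun m _ => Finset.sum_congr rfl fun k _ => by ring
    simp only [hexp]
    rw [intervalIntegral.integral_finset_sum]
    · have : ∀ m ∈ Finset.range N,
          (∫ ω in (0:ℝ)..1, ∑ k ∈ Finset.range N,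
            (a m * (starRingEnd ℂ) (a k)) *
              (Complex.exp (cc m * ω) * (starRingEnd ℂ) (Complex.exp (cc k * ω))))
          = ∑ k ∈ Finset.range N, (a m * (starRingEnd ℂ) (a k)) * (if m = k then 1 else 0) := by
        intro m _
        rw [intervalIntegral.integral_finset_sum]
        · exact Finset.sum_congr rfl fun k _ => by
            rw [intervalIntegral.integral_const_mul, orth]
        · intro k _
          exact (Continuous.intervalIntegrable (by
            exact continuous_const.mul ((cont_E m).mul (Complex.continuous_conj.comp (cont_E k)))) 0 1)
      rw [Finset.sum_congr rfl this]
      push_cast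
      refine Finset.sum_congr rfl fun m hm => ?_
      rw [Finset.sum_eq_single m]
      · simp [Complex.mul_conj, Complex.normSq_eq_norm_sq]
      · intro k _ hk
        simp [Ne.symm hk]
      · intro hcon; exact absurd hm hcon
    · intro m _
      apply Continuous.intervalIntegrable
      apply continuous_finset_sum
      intro k _
      exact continuous_const.mul ((cont_E m).mul (Complex.continuous_conj.comp (cont_E k)))
  -- pass to real parts
  have hre : ∀ ω : ℝ, ‖f ω‖ ^ 2 = Complex.reCLM (f ω * (starRingEnd ℂ) (f ω)) := by
    intro ω
    simp [Complex.mul_conj, ← Complex.sq_norm, ← Complex.ofReal_pow]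
  change ∫ ω in (0:ℝ)..1, ‖f ω‖ ^ 2 = _
  simp only [hre]
  have hcont2 : Continuous fun ω : ℝ => f ω * (starRingEnd ℂ) (f ω) :=
    hfc.mul (Complex.continuous_conj.comp hfc)
  rw [ContinuousLinearMap.intervalIntegral_comp_comm Complex.reCLM
    (hcont2.intervalIntegrable 0 1), hkey]
  simp [← Complex.ofReal_pow]

noncomputable def acoef (ℓ : ℕ) (h : Fin ℓ → ℝ) (B : Fin ℓ → ℂ) (m : ℕ) : ℂ :=
  (1 / ((2 * ℓ - 2).factorial : ℂ)) * ∑ i, B i * ((cc m) ^ (2 * ℓ) *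
    ∫ r in (0:ℝ)..1,
      Complex.exp (cc m * ((h i * r : ℝ) : ℂ)) * ((h i - h i * r : ℝ) : ℂ) ^ (2 * ℓ - 2) * ((h i : ℝ) : ℂ))

lemma cont_inner (c : ℂ) (hi : ℝ) (n : ℕ) :
    Continuous (fun r : ℝ => Complex.exp (c * ((hi * r : ℝ) : ℂ)) *
      ((hi - hi * r : ℝ) : ℂ) ^ n * ((hi : ℝ) : ℂ)) := by fun_prop

lemma RBterm_expand (M ℓ : ℕ) (h : Fin ℓ → ℝ) (B : Fin ℓ → ℂ) (ω : ℝ) :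
    RBterm M ℓ h B ω
      = ∑ m ∈ Finset.range (M + 1), acoef ℓ h B m * Complex.exp (cc m * ω) := by
  have step1 : ∀ i : Fin ℓ,
      (∫ r in (0:ℝ)..1, iteratedDeriv (2 * ℓ) (DirichletKer M) (ω + h i * r) *
          ((h i - h i * r : ℝ) : ℂ) ^ (2 * ℓ - 2) * ((h i : ℝ) : ℂ))
      = ∑ m ∈ Finset.range (M + 1), Complex.exp (cc m * ω) * ((cc m) ^ (2 * ℓ) *
          ∫ r in (0:ℝ)..1, Complex.exp (cc m * ((h i * r : ℝ) : ℂ)) *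
            ((h i - h i * r : ℝ) : ℂ) ^ (2 * ℓ - 2) * ((h i : ℝ) : ℂ)) := by
    intro i
    have hpt : ∀ r : ℝ,
        iteratedDeriv (2 * ℓ) (DirichletKer M) (ω + h i * r) *
          ((h i - h i * r : ℝ) : ℂ) ^ (2 * ℓ - 2) * ((h i : ℝ) : ℂ)
        = ∑ m ∈ Finset.range (M + 1), Complex.exp (cc m * ω) * ((cc m) ^ (2 * ℓ) *
            (Complex.exp (cc m * ((h i * r : ℝ) : ℂ)) *
              ((h i - h i * r : ℝ) : ℂ) ^ (2 * ℓ - 2) * ((h i : ℝ) : ℂ))) := by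
      intro r
      rw [iteratedDeriv_dirichlet]
      simp only [Finset.sum_mul]
      refine Finset.sum_congr rfl fun m _ => ?_
      have hsplit : Complex.exp (cc m * ((ω + h i * r : ℝ) : ℂ))
          = Complex.exp (cc m * ω) * Complex.exp (cc m * ((h i * r : ℝ) : ℂ)) := by
        rw [← Complex.exp_add]
        congr 1
        push_cast
        ring
      rw [hsplit]
      ring
    rw [intervalIntegral.integral_congr (g := fun r => ∑ m ∈ Finset.range (M + 1),
      Complex.exp (cc m * ω) * ((cc m) ^ (2 * ℓ) *
        (Complex.exp (cc m * ((h i * r : ℝ) : ℂ)) *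
          ((h i - h i * r : ℝ) : ℂ) ^ (2 * ℓ - 2) * ((h i : ℝ) : ℂ))))
      (fun r _ => hpt r)]
    rw [intervalIntegral.integral_finset_sum (fun m _ => Continuous.intervalIntegrable
      (by exact (continuous_const.mul (continuous_const.mul (cont_inner (cc m) (h i) (2*ℓ-2)))) ) 0 1)]
    refine Finset.sum_congr rfl fun m _ => ?_
    rw [intervalIntegral.integral_const_mul, intervalIntegral.integral_const_mul]
  unfold RBterm acoef
  simp only [step1, Finset.mul_sum, Finset.sum_mul]
  rw [Finset.sum_comm]
  refine Finset.sum_congr rfl fun m _ => Finset.sum_congr rfl fun i _ => by ring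

lemma norm_cc (m : ℕ) : ‖cc m‖ = 2 * Real.pi * m := by
  simp [cc, norm_mul, Complex.norm_real, Real.norm_eq_abs,
    _root_.abs_of_nonneg Real.pi_pos.le]

lemma inner_integral_bound (c : ℂ) (hi : ℝ) (n : ℕ)
    (hc : ∀ r : ℝ, ‖Complex.exp (c * ((hi * r : ℝ) : ℂ))‖ = 1) :
    ‖∫ r in (0:ℝ)..1, Complex.exp (c * ((hi * r : ℝ) : ℂ)) *
        ((hi - hi * r : ℝ) : ℂ) ^ n * ((hi : ℝ) : ℂ)‖
      ≤ |hi| ^ (n + 1) * (1 / (((n : ℝ) + 1))) := by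
  calc ‖∫ r in (0:ℝ)..1, Complex.exp (c * ((hi * r : ℝ) : ℂ)) *
        ((hi - hi * r : ℝ) : ℂ) ^ n * ((hi : ℝ) : ℂ)‖
      ≤ ∫ r in (0:ℝ)..1, ‖Complex.exp (c * ((hi * r : ℝ) : ℂ)) *
        ((hi - hi * r : ℝ) : ℂ) ^ n * ((hi : ℝ) : ℂ)‖ :=
        intervalIntegral.norm_integral_le_integral_norm zero_le_one
    _ = ∫ r in (0:ℝ)..1, |hi| ^ (n + 1) * (1 - r) ^ n := by
        refine intervalIntegral.integral_congr fun r hr => ?_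
        rw [Set.uIcc_of_le zero_le_one] at hr
        simp only [norm_mul, hc r, one_mul, norm_pow, Complex.norm_real, Real.norm_eq_abs]
        have h1 : |hi - hi * r| = |hi| * (1 - r) := by
          rw [show hi - hi * r = hi * (1 - r) by ring, abs_mul,
            _root_.abs_of_nonneg (by linarith [hr.2] : (0:ℝ) ≤ 1 - r)]
        rw [h1, mul_pow, pow_succ]
        ring
    _ = |hi| ^ (n + 1) * (1 / (((n : ℝ) + 1))) := by
        rw [intervalIntegral.integral_const_mul]
        congr 1
        rw [intervalIntegral.integral_comp_sub_left (fun x : ℝ => x ^ n) 1]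
        norm_num [integral_pow]

lemma exp_unit_norm (m : ℕ) (x : ℝ) : ‖Complex.exp (cc m * (x : ℂ))‖ = 1 := by
  have : cc m * (x : ℂ) = ((2 * Real.pi * m * x : ℝ) : ℂ) * Complex.I := by
    simp only [cc]; push_cast; ring
  rw [this, Complex.norm_exp_ofReal_mul_I]

lemma acoef_bound (M ℓ : ℕ) (hℓ : 2 ≤ ℓ) (Δ τ : ℝ) (hτΔ : 0 < τ * Δ)
    (h : Fin ℓ → ℝ) (hh : ∀ i, |h i| ≤ τ * Δ) (B : Fin ℓ → ℂ)
    (m : ℕ) (hm : m ≤ M) :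
    ‖acoef ℓ h B m‖ ≤ (τ * Δ) ^ (2 * ℓ - 1) * (2 * Real.pi * M) ^ (2 * ℓ) *
      (1 / ((2 * ℓ - 1).factorial : ℝ)) * ∑ i, ‖B i‖ := by
  have hk : 2 * ℓ - 1 = (2 * ℓ - 2) + 1 := by omega
  have hKnn : (0:ℝ) ≤ (2 * Real.pi * M) ^ (2 * ℓ) := by positivity
  set K : ℝ := (2 * Real.pi * M) ^ (2 * ℓ) *
      ((τ * Δ) ^ (2 * ℓ - 1) * (1 / ((2 * ℓ - 1 : ℕ) : ℝ))) with hK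
  have hterm : ∀ i : Fin ℓ, ‖B i * ((cc m) ^ (2 * ℓ) *
      ∫ r in (0:ℝ)..1, Complex.exp (cc m * ((h i * r : ℝ) : ℂ)) *
        ((h i - h i * r : ℝ) : ℂ) ^ (2 * ℓ - 2) * ((h i : ℝ) : ℂ))‖
      ≤ ‖B i‖ * K := by
    intro i
    rw [norm_mul, norm_mul, hK]
    refine mul_le_mul_of_nonneg_left ?_ (norm_nonneg _)
    refine mul_le_mul ?_ ?_ (norm_nonneg _) hKnn
    · rw [norm_pow, norm_cc]
      refine pow_le_pow_left₀ (by positivity) ?_ _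
      have : (m:ℝ) ≤ M := by exact_mod_cast hm
      nlinarith [Real.pi_pos]
    · refine le_trans (inner_integral_bound (cc m) (h i) (2*ℓ-2) (fun r => exp_unit_norm m _)) ?_
      have hcast : ((2*ℓ-2 : ℕ) : ℝ) + 1 = ((2*ℓ-1 : ℕ) : ℝ) := by
        rw [hk]; push_cast; ring
      rw [← hk, hcast]
      refine mul_le_mul_of_nonneg_right ?_ (by positivity)
      exact pow_le_pow_left₀ (abs_nonneg _) (hh i) _
  have hfac : ((2 * ℓ - 1).factorial : ℝ)
      = ((2 * ℓ - 1 : ℕ) : ℝ) * ((2 * ℓ - 2).factorial : ℝ) := by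
    rw [hk, Nat.factorial_succ]
    push_cast
    ring
  have hF2 : ((2 * ℓ - 2).factorial : ℝ) ≠ 0 := Nat.cast_ne_zero.2 (Nat.factorial_ne_zero _)
  have hn1 : ((2 * ℓ - 1 : ℕ) : ℝ) ≠ 0 := Nat.cast_ne_zero.2 (by omega)
  calc ‖acoef ℓ h B m‖
      ≤ ‖(1 / ((2 * ℓ - 2).factorial : ℂ))‖ * ((∑ i, ‖B i‖) * K) := by
        rw [acoef, norm_mul]
        refine mul_le_mul_of_nonneg_left (le_trans (norm_sum_le _ _) ?_) (norm_nonneg _)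
        rw [Finset.sum_mul]
        exact Finset.sum_le_sum fun i _ => hterm i
    _ = (τ * Δ) ^ (2 * ℓ - 1) * (2 * Real.pi * M) ^ (2 * ℓ) *
        (1 / ((2 * ℓ - 1).factorial : ℝ)) * ∑ i, ‖B i‖ := by
        have hnorm : ‖(1 / ((2 * ℓ - 2).factorial : ℂ))‖ = 1 / ((2 * ℓ - 2).factorial : ℝ) := by
          simp
        rw [hnorm, hK, hfac]
        field_simp


/-- Lemma (bound on the remainder `R_B`):
`‖R_B‖_{L²(0,1)} ≤ (τΔ)^{2ℓ-1} √(M+1) (2πM)^{2ℓ} (1/(2ℓ-1)!) Σ_i |B_i|`. -/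
theorem RB_L2_bound (M ℓ : ℕ) (hM : 1 ≤ M) (hℓ : 2 ≤ ℓ) (Δ τ : ℝ) (hΔ : 0 < Δ) (hτ : 0 < τ)
    (h : Fin ℓ → ℝ) (hh : ∀ i, |h i| ≤ τ * Δ) (B : Fin ℓ → ℂ) :
    Real.sqrt (∫ ω in (0 : ℝ)..1, ‖RBterm M ℓ h B ω‖ ^ 2) ≤
      (τ * Δ) ^ (2 * ℓ - 1) * Real.sqrt ((M : ℝ) + 1) * (2 * Real.pi * M) ^ (2 * ℓ) *
        (1 / ((2 * ℓ - 1).factorial : ℝ)) * ∑ i, ‖B i‖ := by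
  have hτΔ : 0 < τ * Δ := mul_pos hτ hΔ
  set C : ℝ := (τ * Δ) ^ (2 * ℓ - 1) * (2 * Real.pi * M) ^ (2 * ℓ) *
      (1 / ((2 * ℓ - 1).factorial : ℝ)) * ∑ i, ‖B i‖ with hC
  have hBnn : (0:ℝ) ≤ ∑ i, ‖B i‖ := Finset.sum_nonneg fun i _ => norm_nonneg _
  have hCnn : 0 ≤ C := by
    rw [hC]
    have h1 : (0:ℝ) ≤ (τ * Δ) ^ (2 * ℓ - 1) := by positivity
    have h2 : (0:ℝ) ≤ (2 * Real.pi * M) ^ (2 * ℓ) := by positivity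
    have h3 : (0:ℝ) ≤ 1 / ((2 * ℓ - 1).factorial : ℝ) := by positivity
    exact mul_nonneg (mul_nonneg (mul_nonneg h1 h2) h3) hBnn
  have hpar : (∫ ω in (0:ℝ)..1, ‖RBterm M ℓ h B ω‖ ^ 2)
      = ∑ m ∈ Finset.range (M + 1), ‖acoef ℓ h B m‖ ^ 2 := by
    have : ∀ ω : ℝ, ‖RBterm M ℓ h B ω‖ ^ 2
        = ‖∑ m ∈ Finset.range (M + 1), acoef ℓ h B m * Complex.exp (cc m * ω)‖ ^ 2 := by
      intro ω
      rw [RBterm_expand]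
    simp only [this]
    exact parseval_fin (M + 1) _
  have hsum : (∑ m ∈ Finset.range (M + 1), ‖acoef ℓ h B m‖ ^ 2)
      ≤ ((M : ℝ) + 1) * C ^ 2 := by
    calc (∑ m ∈ Finset.range (M + 1), ‖acoef ℓ h B m‖ ^ 2)
        ≤ ∑ _m ∈ Finset.range (M + 1), C ^ 2 := by
          refine Finset.sum_le_sum fun m hm => ?_
          refine pow_le_pow_left₀ (norm_nonneg _) ?_ 2
          exact acoef_bound M ℓ hℓ Δ τ hτΔ h hh B m (Finset.mem_range_succ_iff.1 hm)
      _ = ((M : ℝ) + 1) * C ^ 2 := by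
          rw [Finset.sum_const, Finset.card_range, nsmul_eq_mul]
          push_cast
          ring
  calc Real.sqrt (∫ ω in (0:ℝ)..1, ‖RBterm M ℓ h B ω‖ ^ 2)
      ≤ Real.sqrt (((M : ℝ) + 1) * C ^ 2) := by
        rw [hpar]
        exact Real.sqrt_le_sqrt hsum
    _ = Real.sqrt ((M : ℝ) + 1) * C := by
        rw [Real.sqrt_mul (by positivity), Real.sqrt_sq hCnn]
    _ = (τ * Δ) ^ (2 * ℓ - 1) * Real.sqrt ((M : ℝ) + 1) * (2 * Real.pi * M) ^ (2 * ℓ) *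
        (1 / ((2 * ℓ - 1).factorial : ℝ)) * ∑ i, ‖B i‖ := by
        rw [hC]; ring
end

section
/- For all integers ℓ ≥ 2 and reals τ ≥ 1 there exists a constant C_A = C_A(ℓ, τ) > 0 as follows. Let M ≥ 1 be an integer, let 0 < α ≤ 1, and let 0 = τ_1 < τ_2 < … < τ_ℓ ≤ τ be reals with |τ_i − τ_j| ≥ 1 for all i ≠ j. Set h_i := −τ_i·(α/M), and let (A_1, …, A_ℓ, B_1, …, B_ℓ) be the unique solution of the linear system U_{2ℓ}(h)·(A; B)ᵀ = (0, …, 0, (2ℓ−1)!)ᵀ. Then Σ_{i=1}^{ℓ} |A_i| ≤ C_A · (M/α)^{2ℓ−1}. -/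
open scoped BigOperators
open Polynomial Matrix

/-- The square `2ℓ × 2ℓ` confluent Vandermonde matrix `U_{2ℓ}(h)`: rows `k = 0, …, 2ℓ-1`,
entry `h_j^k` in column `j` and `k h_j^{k-1}` in column `ℓ + j`. -/
noncomputable def U2l (ℓ : ℕ) (h : Fin ℓ → ℝ) : Matrix (Fin (2 * ℓ)) (Fin ℓ ⊕ Fin ℓ) ℂ :=
  fun k => Sum.elim (fun j => ((h j : ℂ)) ^ (k : ℕ))
    (fun j => ((k : ℕ) : ℂ) * ((h j : ℂ)) ^ ((k : ℕ) - 1))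

/-- The right-hand side `(0, …, 0, (2ℓ-1)!)ᵀ` of the finite-difference linear system. -/
noncomputable def fdRhs (ℓ : ℕ) : Fin (2 * ℓ) → ℂ :=
  fun k => if (k : ℕ) = 2 * ℓ - 1 then ((2 * ℓ - 1).factorial : ℂ) else 0

def fdEqv (ℓ : ℕ) : Fin (2 * ℓ) ≃ Fin ℓ ⊕ Fin ℓ :=
  (finCongr (two_mul ℓ)).trans finSumFinEquiv.symm

noncomputable def Wmat (ℓ : ℕ) (x : Fin ℓ → ℝ) : Matrix (Fin (2 * ℓ)) (Fin (2 * ℓ)) ℂ :=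
  (U2l ℓ x).submatrix id (fdEqv ℓ)

lemma double_root (c : ℂ) (r : ℂ[X]) :
    ((X - C c) ^ 2 * r).eval c = 0 ∧
      (derivative ((X - C c) ^ 2 * r)).eval c = 0 := by
  constructor
  · simp
  · rw [derivative_mul, derivative_pow]
    simp

lemma Wmat_mulVec (ℓ : ℕ) (x : Fin ℓ → ℝ) (v : Fin ℓ ⊕ Fin ℓ → ℂ) :
    (Wmat ℓ x).mulVec (v ∘ fdEqv ℓ) = (U2l ℓ x).mulVec v := by
  funext k
  simp only [Wmat, Matrix.mulVec, dotProduct, Matrix.submatrix_apply, id_eq,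
    Function.comp_apply]
  exact (fdEqv ℓ).sum_comp (fun c => U2l ℓ x k c * v c)

lemma det_Wmat_ne_zero (ℓ : ℕ) (hℓ : 1 ≤ ℓ) (x : Fin ℓ → ℝ)
    (hx : Function.Injective x) : (Wmat ℓ x).det ≠ 0 := by
  intro hdet
  obtain ⟨w, hw0, hmul⟩ := (Matrix.exists_mulVec_eq_zero_iff).2 hdet
  set e := fdEqv ℓ
  set z : Fin ℓ → ℂ := fun j => ((x j : ℝ) : ℂ) with hz
  have hzinj : Function.Injective z := fun i j hij => hx (Complex.ofReal_injective hij)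
  set a : Fin ℓ → ℂ := fun j => w (e.symm (Sum.inl j)) with ha
  set b : Fin ℓ → ℂ := fun j => w (e.symm (Sum.inr j)) with hb
  have hw : w = (Sum.elim a b) ∘ e := by
    funext k
    simp only [Function.comp_apply]
    rcases hek : e k with j | j
    · simp only [Sum.elim_inl, ha]
      exact congrArg w (by rw [← hek, Equiv.symm_apply_apply])
    · simp only [Sum.elim_inr, hb]
      exact congrArg w (by rw [← hek, Equiv.symm_apply_apply])
  have hU : (U2l ℓ x).mulVec (Sum.elim a b) = 0 := by
    rw [← Wmat_mulVec, ← hw, hmul]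
  -- rows: for each k < 2ℓ
  have hrow : ∀ k : Fin (2 * ℓ),
      ∑ j, (a j * z j ^ (k : ℕ) + b j * (((k : ℕ) : ℂ) * z j ^ ((k : ℕ) - 1))) = 0 := by
    intro k
    have := congrFun hU k
    simp only [Matrix.mulVec, dotProduct, U2l, Pi.zero_apply, Fintype.sum_sum_type,
      Sum.elim_inl, Sum.elim_inr] at this
    rw [← this, ← Finset.sum_add_distrib]
    congr 1; funext j; ring
  -- key functional identity
  have key : ∀ p : ℂ[X], p.natDegree < 2 * ℓ →
      ∑ j, (a j * p.eval (z j) + b j * (derivative p).eval (z j)) = 0 := by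
    intro p hdeg
    conv_lhs => rw [p.as_sum_range' (2 * ℓ) hdeg]
    have : ∀ j, a j * (∑ i ∈ Finset.range (2 * ℓ), (monomial i (p.coeff i))).eval (z j)
        + b j * (derivative (∑ i ∈ Finset.range (2 * ℓ), (monomial i (p.coeff i)))).eval (z j)
        = ∑ i ∈ Finset.range (2 * ℓ),
            p.coeff i * (a j * z j ^ i + b j * ((i : ℂ) * z j ^ (i - 1))) := by
      intro j
      rw [Polynomial.eval_finset_sum, derivative_sum, Polynomial.eval_finset_sum,
        Finset.mul_sum, Finset.mul_sum, ← Finset.sum_add_distrib]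
      congr 1; funext i
      rw [Polynomial.eval_monomial, Polynomial.derivative_monomial, Polynomial.eval_monomial]
      ring
    simp only [this]
    rw [Finset.sum_comm]
    apply Finset.sum_eq_zero
    intro i hi
    rw [← Finset.mul_sum]
    have : ∑ j, (a j * z j ^ i + b j * ((i : ℂ) * z j ^ (i - 1))) = 0 := by
      have := hrow ⟨i, Finset.mem_range.1 hi⟩
      simpa using this
    rw [this, mul_zero]
  have main : ∀ j₀ : Fin ℓ, a j₀ = 0 ∧ b j₀ = 0 := by
    intro j₀
    set P : ℂ[X] := ∏ m ∈ Finset.univ.erase j₀, (X - C (z m)) ^ 2 with hPdef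
    have hPd2 : P.natDegree ≤ 2 * (ℓ - 1) := by
      calc P.natDegree ≤ ∑ m ∈ Finset.univ.erase j₀, ((X - C (z m)) ^ 2).natDegree :=
            Polynomial.natDegree_prod_le _ _
        _ ≤ ∑ _m ∈ Finset.univ.erase j₀, 2 := by
            apply Finset.sum_le_sum; intro m _
            rw [Polynomial.natDegree_pow, Polynomial.natDegree_X_sub_C]
        _ = 2 * (ℓ - 1) := by
            rw [Finset.sum_const, Finset.card_erase_of_mem (Finset.mem_univ _)]
            simp [mul_comm]
    have hPdeg : P.natDegree < 2 * ℓ := lt_of_le_of_lt hPd2 (by omega)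
    have hPfac : ∀ m : Fin ℓ, m ≠ j₀ → ∃ r, P = (X - C (z m)) ^ 2 * r := by
      intro m hm
      exact ⟨_, (Finset.mul_prod_erase _ _ (by simp [hm])).symm⟩
    have hPne : P.eval (z j₀) ≠ 0 := by
      rw [hPdef, Polynomial.eval_prod]
      apply Finset.prod_ne_zero_iff.2
      intro m hm
      simp only [Polynomial.eval_pow, Polynomial.eval_sub, Polynomial.eval_X,
        Polynomial.eval_C]
      exact pow_ne_zero _ (sub_ne_zero.2 fun h =>
        (Finset.mem_erase.1 hm).1 ((hzinj h).symm))
    set Q : ℂ[X] := (X - C (z j₀)) * P with hQdef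
    have hQdeg : Q.natDegree < 2 * ℓ := by
      have h2 : Q.natDegree ≤ 1 + P.natDegree := by
        rw [hQdef]
        exact le_trans Polynomial.natDegree_mul_le
          (by rw [Polynomial.natDegree_X_sub_C])
      omega
    have hQzero : ∀ m : Fin ℓ, m ≠ j₀ →
        Q.eval (z m) = 0 ∧ (derivative Q).eval (z m) = 0 := by
      intro m hm
      obtain ⟨r, hr⟩ := hPfac m hm
      have : Q = (X - C (z m)) ^ 2 * ((X - C (z j₀)) * r) := by rw [hQdef, hr]; ring
      rw [this]
      exact double_root _ _
    have hQj₀ : Q.eval (z j₀) = 0 := by simp [hQdef]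
    have hQ'j₀ : (derivative Q).eval (z j₀) = P.eval (z j₀) := by
      rw [hQdef, derivative_mul]
      simp
    have hb0 : b j₀ = 0 := by
      have h1 := key Q hQdeg
      rw [Finset.sum_eq_single j₀ (fun m _ hm => by
          rw [(hQzero m hm).1, (hQzero m hm).2]; ring)
        (fun h => absurd (Finset.mem_univ j₀) h)] at h1
      rw [hQj₀, hQ'j₀] at h1
      have : b j₀ * P.eval (z j₀) = 0 := by linear_combination h1
      rcases mul_eq_zero.1 this with h | h
      · exact h
      · exact absurd h hPne
    have hP'zero : ∀ m : Fin ℓ, m ≠ j₀ →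
        P.eval (z m) = 0 ∧ (derivative P).eval (z m) = 0 := by
      intro m hm
      obtain ⟨r, hr⟩ := hPfac m hm
      rw [hr]
      exact double_root _ _
    have ha0 : a j₀ = 0 := by
      have h1 := key P hPdeg
      rw [Finset.sum_eq_single j₀ (fun m _ hm => by
          rw [(hP'zero m hm).1, (hP'zero m hm).2]; ring)
        (fun h => absurd (Finset.mem_univ j₀) h)] at h1
      rw [hb0] at h1
      have : a j₀ * P.eval (z j₀) = 0 := by linear_combination h1
      rcases mul_eq_zero.1 this with h | h
      · exact h
      · exact absurd h hPne
    exact ⟨ha0, hb0⟩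
  apply hw0
  rw [hw]
  funext k
  rcases hek : e k with j | j <;> simp [hek, (main j).1, (main j).2]

lemma fd_bounded (ℓ : ℕ) (hℓ : 1 ≤ ℓ) (τ : ℝ) :
    ∃ C : ℝ, 0 < C ∧ ∀ t : Fin ℓ → ℝ, (∀ i, t i ∈ Set.Icc (0:ℝ) τ) →
      (∀ i j : Fin ℓ, i ≠ j → 1 ≤ |t i - t j|) →
      ∀ A B : Fin ℓ → ℂ,
        (U2l ℓ (fun i => -(t i))).mulVec (Sum.elim A B) = fdRhs ℓ →
        ∑ j, ‖A j‖ ≤ C := by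
  classical
  set K : Set (Fin ℓ → ℝ) :=
    {t | (∀ i, t i ∈ Set.Icc (0:ℝ) τ) ∧ ∀ i j : Fin ℓ, i ≠ j → 1 ≤ |t i - t j|} with hK
  have hKsub : K ⊆ Set.univ.pi (fun _ : Fin ℓ => Set.Icc (0:ℝ) τ) := by
    intro t ht i _
    exact ht.1 i
  have hKclosed : IsClosed K := by
    have h1 : IsClosed {t : Fin ℓ → ℝ | ∀ i, t i ∈ Set.Icc (0:ℝ) τ} := by
      have : {t : Fin ℓ → ℝ | ∀ i, t i ∈ Set.Icc (0:ℝ) τ}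
          = ⋂ i, {t : Fin ℓ → ℝ | t i ∈ Set.Icc (0:ℝ) τ} := by ext; simp
      rw [this]
      exact isClosed_iInter fun i => IsClosed.preimage (continuous_apply i) isClosed_Icc
    have h2 : IsClosed {t : Fin ℓ → ℝ | ∀ i j : Fin ℓ, i ≠ j → 1 ≤ |t i - t j|} := by
      have : {t : Fin ℓ → ℝ | ∀ i j : Fin ℓ, i ≠ j → 1 ≤ |t i - t j|}
          = ⋂ i, ⋂ j, {t : Fin ℓ → ℝ | i ≠ j → 1 ≤ |t i - t j|} := by ext; simp
      rw [this]
      refine isClosed_iInter fun i => isClosed_iInter fun j => ?_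
      by_cases h : i = j
      · simp [h]
      · have : {t : Fin ℓ → ℝ | i ≠ j → 1 ≤ |t i - t j|}
            = {t : Fin ℓ → ℝ | 1 ≤ |t i - t j|} := by ext; simp [h]
        rw [this]
        exact isClosed_le continuous_const
          (((continuous_apply i).sub (continuous_apply j)).abs)
    have : K = {t : Fin ℓ → ℝ | ∀ i, t i ∈ Set.Icc (0:ℝ) τ}
        ∩ {t : Fin ℓ → ℝ | ∀ i j : Fin ℓ, i ≠ j → 1 ≤ |t i - t j|} := by
      ext t; simp [hK, Set.mem_setOf_eq]
    rw [this]
    exact h1.inter h2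
  have hKcomp : IsCompact K :=
    (isCompact_univ_pi fun _ => isCompact_Icc).of_isClosed_subset hKclosed hKsub
  -- the matrix as a function of t
  set W : (Fin ℓ → ℝ) → Matrix (Fin (2 * ℓ)) (Fin (2 * ℓ)) ℂ :=
    fun t => Wmat ℓ (fun i => -(t i)) with hW
  have hWc : Continuous W := by
    apply continuous_matrix
    intro k k'
    simp only [hW, Wmat, Matrix.submatrix_apply, id_eq, U2l]
    rcases fdEqv ℓ k' with j | j
    · simp only [Sum.elim_inl]
      exact (Complex.continuous_ofReal.comp (continuous_apply j).neg).pow _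
    · simp only [Sum.elim_inr]
      exact continuous_const.mul
        ((Complex.continuous_ofReal.comp (continuous_apply j).neg).pow _)
  have hdetK : ∀ t ∈ K, (W t).det ≠ 0 := by
    intro t ht
    apply det_Wmat_ne_zero ℓ hℓ
    intro i j hij
    by_contra hne
    have h1 : t i = t j := neg_injective hij
    have := ht.2 i j hne
    rw [h1, sub_self, abs_zero] at this
    linarith
  -- continuity of the inverse on K
  have hinv : ContinuousOn (fun t => (W t)⁻¹) K := by
    have heq : (fun t => (W t)⁻¹)
        = fun t => ((W t).det)⁻¹ • (W t).adjugate := by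
      funext t
      rw [Matrix.inv_def, Ring.inverse_eq_inv']
    rw [heq]
    exact ((hWc.matrix_det.continuousOn).inv₀ hdetK).smul
      hWc.matrix_adjugate.continuousOn
  set f : (Fin ℓ → ℝ) → ℝ :=
    fun t => ∑ j, ‖((W t)⁻¹.mulVec (fdRhs ℓ)) ((fdEqv ℓ).symm (Sum.inl j))‖ with hf
  have hfc : ContinuousOn f K := by
    apply continuousOn_finset_sum
    intro j _
    apply ContinuousOn.norm
    simp only [Matrix.mulVec, dotProduct]
    apply continuousOn_finset_sum
    intro k' _
    exact (((continuous_apply k').comp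
      ((continuous_apply ((fdEqv ℓ).symm (Sum.inl j))).comp continuous_id)).comp_continuousOn
      (by exact hinv)).mul continuousOn_const
  obtain ⟨C₀, hC₀⟩ := hKcomp.exists_bound_of_continuousOn hfc
  refine ⟨max C₀ 0 + 1, by positivity, ?_⟩
  intro t ht1 ht2 A B hsys
  have htK : t ∈ K := ⟨ht1, ht2⟩
  have hdet := hdetK t htK
  have hWv : (W t).mulVec ((Sum.elim A B) ∘ fdEqv ℓ) = fdRhs ℓ := by
    rw [hW]
    rw [Wmat_mulVec]
    exact hsys
  have hsol : (Sum.elim A B) ∘ fdEqv ℓ = (W t)⁻¹.mulVec (fdRhs ℓ) := by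
    rw [← hWv, Matrix.mulVec_mulVec, Matrix.nonsing_inv_mul _ (isUnit_iff_ne_zero.2 hdet),
      Matrix.one_mulVec]
  have hA : ∀ j, A j = ((W t)⁻¹.mulVec (fdRhs ℓ)) ((fdEqv ℓ).symm (Sum.inl j)) := by
    intro j
    rw [← hsol]
    simp
  have : ∑ j, ‖A j‖ = f t := by
    rw [hf]
    exact Finset.sum_congr rfl fun j _ => by rw [hA j]
  rw [this]
  calc f t ≤ ‖f t‖ := le_abs_self _
    _ ≤ C₀ := hC₀ t htK
    _ ≤ max C₀ 0 + 1 := by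
        have := le_max_left C₀ (0:ℝ); linarith

-- scaling lemma
lemma fd_scale (ℓ : ℕ) (hℓ : 1 ≤ ℓ) (t : Fin ℓ → ℝ) (s : ℝ)
    (A B : Fin ℓ → ℂ)
    (hsys : (U2l ℓ (fun i => -(t i) * s)).mulVec (Sum.elim A B) = fdRhs ℓ) :
    (U2l ℓ (fun i => -(t i))).mulVec
      (Sum.elim (fun j => (s : ℂ) ^ (2 * ℓ - 1) * A j)
        (fun j => (s : ℂ) ^ (2 * ℓ - 2) * B j)) = fdRhs ℓ := by
  funext k
  have hk : (k : ℕ) < 2 * ℓ := k.2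
  have Hk := congrFun hsys k
  simp only [Matrix.mulVec, dotProduct, U2l, Fintype.sum_sum_type, Sum.elim_inl,
    Sum.elim_inr] at Hk ⊢
  have e1 : ∀ j : Fin ℓ, ((-(t j) : ℝ) : ℂ) ^ (k : ℕ) * ((s : ℂ) ^ (2 * ℓ - 1) * A j)
      = (s : ℂ) ^ (2 * ℓ - 1 - (k : ℕ)) * (((-(t j) * s : ℝ) : ℂ) ^ (k : ℕ) * A j) := by
    intro j
    have hc : ((-(t j) * s : ℝ) : ℂ) = ((-(t j) : ℝ) : ℂ) * (s : ℂ) := by push_cast; ring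
    have hpow : (s : ℂ) ^ (2 * ℓ - 1) = (s : ℂ) ^ (2 * ℓ - 1 - (k : ℕ)) * (s : ℂ) ^ (k : ℕ) := by
      rw [← pow_add]; congr 1; omega
    rw [hc, mul_pow, hpow]
    ring
  have e2 : ∀ j : Fin ℓ, ((k : ℕ) : ℂ) * ((-(t j) : ℝ) : ℂ) ^ ((k : ℕ) - 1)
        * ((s : ℂ) ^ (2 * ℓ - 2) * B j)
      = (s : ℂ) ^ (2 * ℓ - 1 - (k : ℕ))
        * (((k : ℕ) : ℂ) * ((-(t j) * s : ℝ) : ℂ) ^ ((k : ℕ) - 1) * B j) := by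
    intro j
    rcases Nat.eq_zero_or_pos (k : ℕ) with h0 | h0
    · simp [h0]
    · have hc : ((-(t j) * s : ℝ) : ℂ) = ((-(t j) : ℝ) : ℂ) * (s : ℂ) := by push_cast; ring
      have hpow : (s : ℂ) ^ (2 * ℓ - 2)
          = (s : ℂ) ^ (2 * ℓ - 1 - (k : ℕ)) * (s : ℂ) ^ ((k : ℕ) - 1) := by
        rw [← pow_add]; congr 1; omega
      rw [hc, mul_pow, hpow]
      ring
  calc (∑ j, ((-(t j) : ℝ) : ℂ) ^ (k : ℕ) * ((s : ℂ) ^ (2 * ℓ - 1) * A j))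
        + ∑ j, ((k : ℕ) : ℂ) * ((-(t j) : ℝ) : ℂ) ^ ((k : ℕ) - 1)
            * ((s : ℂ) ^ (2 * ℓ - 2) * B j)
      = (s : ℂ) ^ (2 * ℓ - 1 - (k : ℕ))
          * ((∑ j, ((-(t j) * s : ℝ) : ℂ) ^ (k : ℕ) * A j)
            + ∑ j, ((k : ℕ) : ℂ) * ((-(t j) * s : ℝ) : ℂ) ^ ((k : ℕ) - 1) * B j) := by
        rw [mul_add, Finset.mul_sum, Finset.mul_sum]
        congr 1
        · exact Finset.sum_congr rfl fun j _ => e1 j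
        · exact Finset.sum_congr rfl fun j _ => e2 j
    _ = (s : ℂ) ^ (2 * ℓ - 1 - (k : ℕ)) * fdRhs ℓ k := by rw [Hk]
    _ = fdRhs ℓ k := by
        by_cases h : (k : ℕ) = 2 * ℓ - 1
        · rw [h, Nat.sub_self, pow_zero, one_mul]
        · simp [fdRhs, h]

/-- Lemma (bound on the finite-difference weights `A_i`): there is `C_A = C_A(ℓ, τ)` such
that for nodes `h_i = -τ_i α/M` with `0 = τ_1 < … < τ_ℓ ≤ τ`, `|τ_i - τ_j| ≥ 1`, and the
weights solving `U_{2ℓ}(h)(A; B)ᵀ = (0, …, 0, (2ℓ-1)!)ᵀ`, one has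
`Σ_i |A_i| ≤ C_A (M/α)^{2ℓ-1}`. -/
theorem fd_weights_A_bound (ℓ : ℕ) (hℓ : 2 ≤ ℓ) (τ : ℝ) (hτ : 1 ≤ τ) :
    ∃ C_A : ℝ, 0 < C_A ∧
      ∀ (M : ℕ), 1 ≤ M → ∀ α : ℝ, 0 < α → α ≤ 1 →
        ∀ t : Fin ℓ → ℝ, t ⟨0, by omega⟩ = 0 → StrictMono t → (∀ i, t i ≤ τ) →
          (∀ i j : Fin ℓ, i ≠ j → 1 ≤ |t i - t j|) →
          ∀ A B : Fin ℓ → ℂ,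
            (U2l ℓ (fun i => -(t i) * (α / M))).mulVec (Sum.elim A B) = fdRhs ℓ →
            ∑ i, ‖A i‖ ≤ C_A * ((M : ℝ) / α) ^ (2 * ℓ - 1) := by
  obtain ⟨C, hCpos, hC⟩ := fd_bounded ℓ (by omega) τ
  refine ⟨C, hCpos, ?_⟩
  intro M hM α hα hα1 t ht0 hmono htτ hsep A B hsys
  have hM0 : (0:ℝ) < (M : ℝ) := by exact_mod_cast hM
  set s : ℝ := α / (M : ℝ) with hs
  have hspos : 0 < s := div_pos hα hM0
  have hIcc : ∀ i, t i ∈ Set.Icc (0:ℝ) τ := by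
    intro i
    refine ⟨?_, htτ i⟩
    have h0le : (⟨0, by omega⟩ : Fin ℓ) ≤ i := Fin.le_def.mpr (Nat.zero_le _)
    have := hmono.monotone h0le
    rw [ht0] at this
    exact this
  have hsys' := fd_scale ℓ (by omega) t s A B hsys
  have hb := hC t hIcc hsep _ _ hsys'
  have hnorm : ∑ j, ‖(s : ℂ) ^ (2 * ℓ - 1) * A j‖ = s ^ (2 * ℓ - 1) * ∑ j, ‖A j‖ := by
    rw [Finset.mul_sum]
    refine Finset.sum_congr rfl fun j _ => ?_
    rw [norm_mul, norm_pow, Complex.norm_real, Real.norm_eq_abs, abs_of_pos hspos]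
  rw [hnorm] at hb
  have hinv : ((M : ℝ) / α) = s⁻¹ := by rw [hs, inv_div]
  rw [hinv, inv_pow, ← div_eq_mul_inv, le_div_iff₀ (pow_pos hspos _), mul_comm]
  exact hb
end

section
/- Let x_1, …, x_n be pairwise distinct complex numbers, and let 𝐔_{2n}(x) be the 2n × 2n confluent Vandermonde matrix with rows indexed by k = 0, …, 2n−1, entry x_j^k in column j and entry k·x_j^{k−1} in column n+j. For each λ ∈ {1, …, n} set b_λ := max( 1 + |x_λ|, 1 + 2(1 + |x_λ|)·Σ_{ν≠λ} 1/|x_ν − x_λ| ). Then 𝐔_{2n}(x) is invertible and ‖𝐔_{2n}(x)^{−1}‖_∞ ≤ max_{1≤λ≤n} b_λ · ( Π_{ν≠λ} (1 + |x_ν|)/|x_ν − x_λ| )². -/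
open scoped BigOperators

/-- The maximum-absolute-row-sum operator norm of a square complex matrix. -/
noncomputable def rowSumNorm {n : Type*} [Fintype n] (M : Matrix n n ℂ) : ℝ :=
  ⨆ i, ∑ j, ‖M i j‖

/-- The row index `k ∈ {0, …, 2n-1}` corresponding to an element of `Fin n ⊕ Fin n`
(first summand: `k = i`; second summand: `k = n + i`). -/
def rowIdx (n : ℕ) : Fin n ⊕ Fin n → ℕ :=
  Sum.elim (fun i => (i : ℕ)) (fun i => n + (i : ℕ))

/-- The square `2n × 2n` confluent Vandermonde matrix with rows `k = 0, …, 2n-1`, entry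
`x_j^k` in column `j` and `k x_j^{k-1}` in column `n + j`. -/
noncomputable def UconfSq (n : ℕ) (x : Fin n → ℂ) :
    Matrix (Fin n ⊕ Fin n) (Fin n ⊕ Fin n) ℂ :=
  fun r => Sum.elim
    (fun j => x j ^ rowIdx n r)
    (fun j => ((rowIdx n r : ℕ) : ℂ) * x j ^ (rowIdx n r - 1))


open Polynomial Finset

namespace GautschiAux

/-- ℓ¹ sum of absolute values of coefficients. -/
noncomputable def S (p : ℂ[X]) : ℝ := ∑ k ∈ p.support, ‖p.coeff k‖

lemma S_eq_of_subset {p : ℂ[X]} {t : Finset ℕ} (h : p.support ⊆ t) :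
    S p = ∑ k ∈ t, ‖p.coeff k‖ := by
  refine Finset.sum_subset h fun k _ hk => ?_
  simp [Polynomial.notMem_support_iff.mp hk]

lemma S_nonneg (p : ℂ[X]) : 0 ≤ S p := Finset.sum_nonneg fun _ _ => norm_nonneg _

lemma S_one : S 1 = 1 := by
  have : (1 : ℂ[X]).support = {0} := by
    rw [← Polynomial.C_1, Polynomial.support_C (by norm_num)]
  simp [S, this]

lemma S_add_le (p q : ℂ[X]) : S (p + q) ≤ S p + S q := by
  rw [S_eq_of_subset (t := p.support ∪ q.support) (Polynomial.support_add),
      S_eq_of_subset (p := p) (t := p.support ∪ q.support) (Finset.subset_union_left),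
      S_eq_of_subset (p := q) (t := p.support ∪ q.support) (Finset.subset_union_right)]
  refine le_trans (Finset.sum_le_sum (g := fun k => ‖p.coeff k‖ + ‖q.coeff k‖)
    fun k _ => by simpa using norm_add_le (p.coeff k) (q.coeff k))
    (le_of_eq Finset.sum_add_distrib)

lemma S_C_mul (a : ℂ) (p : ℂ[X]) : S (C a * p) ≤ ‖a‖ * S p := by
  have hsub : (C a * p).support ⊆ p.support := by
    intro k hk
    simp only [Polynomial.mem_support_iff, Polynomial.coeff_C_mul] at hk ⊢
    exact fun h => hk (by simp [h])
  rw [S_eq_of_subset hsub, S, Finset.mul_sum]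
  exact Finset.sum_le_sum fun k _ => by simp [Polynomial.coeff_C_mul]

lemma S_X_mul (p : ℂ[X]) : S (X * p) ≤ S p := by
  have hsub : (X * p).support ⊆ p.support.image (· + 1) := by
    intro k hk
    simp only [Polynomial.mem_support_iff] at hk
    match k with
    | 0 => exact absurd (by simp [Polynomial.mul_coeff_zero]) hk
    | (j+1) =>
      rw [Polynomial.coeff_X_mul] at hk
      exact Finset.mem_image.mpr ⟨j, Polynomial.mem_support_iff.mpr hk, rfl⟩
  rw [S_eq_of_subset hsub, Finset.sum_image (fun a _ b _ h => by omega)]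
  exact le_of_eq (Finset.sum_congr rfl fun k _ => by rw [Polynomial.coeff_X_mul])

lemma S_linear_mul (a b : ℂ) (p : ℂ[X]) :
    S ((C a * X + C b) * p) ≤ (‖a‖ + ‖b‖) * S p := by
  have h1 : (C a * X + C b) * p = C a * (X * p) + C b * p := by ring
  rw [h1]
  calc S (C a * (X * p) + C b * p) ≤ S (C a * (X * p)) + S (C b * p) := S_add_le _ _
    _ ≤ ‖a‖ * S (X * p) + ‖b‖ * S p := add_le_add (S_C_mul _ _) (S_C_mul _ _)
    _ ≤ ‖a‖ * S p + ‖b‖ * S p := by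
        have := S_X_mul p
        nlinarith [norm_nonneg a, S_nonneg p]
    _ = (‖a‖ + ‖b‖) * S p := by ring

lemma S_X_sub_C_mul (c : ℂ) (p : ℂ[X]) : S ((X - C c) * p) ≤ (1 + ‖c‖) * S p := by
  have h : (X - C c) = (C 1 * X + C (-c)) := by simp [sub_eq_add_neg]
  calc S ((X - C c) * p) = S ((C 1 * X + C (-c)) * p) := by rw [h]
    _ ≤ (‖(1:ℂ)‖ + ‖-c‖) * S p := S_linear_mul _ _ _
    _ = (1 + ‖c‖) * S p := by simp

lemma S_prod_mul {ι : Type*} (t : Finset ι) (y : ι → ℂ) (p : ℂ[X]) :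
    S ((∏ ν ∈ t, (X - C (y ν))) * p) ≤ (∏ ν ∈ t, (1 + ‖y ν‖)) * S p := by
  classical
  induction t using Finset.cons_induction with
  | empty => simp
  | cons a t ha ih =>
    rw [Finset.prod_cons, Finset.prod_cons, mul_assoc]
    calc S ((X - C (y a)) * ((∏ ν ∈ t, (X - C (y ν))) * p))
        ≤ (1 + ‖y a‖) * S ((∏ ν ∈ t, (X - C (y ν))) * p) := S_X_sub_C_mul _ _
      _ ≤ (1 + ‖y a‖) * ((∏ ν ∈ t, (1 + ‖y ν‖)) * S p) := by
          refine mul_le_mul_of_nonneg_left ih (by positivity)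
      _ = (1 + ‖y a‖) * (∏ ν ∈ t, (1 + ‖y ν‖)) * S p := by ring

lemma S_prod {ι : Type*} (t : Finset ι) (y : ι → ℂ) :
    S (∏ ν ∈ t, (X - C (y ν))) ≤ ∏ ν ∈ t, (1 + ‖y ν‖) := by
  have := S_prod_mul t y 1
  simpa [S_one] using this

end GautschiAux


namespace GautschiAux2

lemma derivative_prod_finset {ι : Type*} [DecidableEq ι] (s : Finset ι) (f : ι → Polynomial ℂ) :
    derivative (∏ i ∈ s, f i) = ∑ i ∈ s, (∏ j ∈ s.erase i, f j) * derivative (f i) := by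
  rw [Finset.prod_eq_multiset_prod, Polynomial.derivative_prod]
  rw [Finset.sum_eq_multiset_sum]
  congr 1

variable {n : ℕ} (x : Fin n → ℂ) (j : Fin n)

noncomputable def qp : Polynomial ℂ := ∏ ν ∈ univ.erase j, (X - C (x ν))
noncomputable def dd : ℂ := ∏ ν ∈ univ.erase j, (x j - x ν)
noncomputable def Lp : Polynomial ℂ := C (dd x j)⁻¹ * qp x j
noncomputable def cc : ℂ := ∑ ν ∈ univ.erase j, (x j - x ν)⁻¹
noncomputable def Ap : Polynomial ℂ := 1 - C (2 * cc x j) * (X - C (x j))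
noncomputable def hp : Polynomial ℂ := Ap x j * (Lp x j * Lp x j)
noncomputable def kp : Polynomial ℂ := (X - C (x j)) * (Lp x j * Lp x j)

variable {x}

lemma sub_ne (hx : Function.Injective x) {ν : Fin n} (hν : ν ∈ univ.erase j) :
    x j - x ν ≠ 0 :=
  sub_ne_zero.mpr fun h => (Finset.ne_of_mem_erase hν) (hx h.symm)

lemma dd_ne (hx : Function.Injective x) : dd x j ≠ 0 :=
  Finset.prod_ne_zero_iff.mpr fun ν hν => sub_ne j hx hν

lemma eval_qp_self : eval (x j) (qp x j) = dd x j := by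
  simp [qp, dd, eval_prod]

lemma eval_qp_other {μ : Fin n} (hμ : μ ≠ j) : eval (x μ) (qp x j) = 0 := by
  rw [qp, eval_prod]
  exact Finset.prod_eq_zero (Finset.mem_erase.mpr ⟨hμ, mem_univ _⟩) (by simp)

lemma eval_Lp_self (hx : Function.Injective x) : eval (x j) (Lp x j) = 1 := by
  simp [Lp, eval_qp_self, inv_mul_cancel₀ (dd_ne j hx)]

lemma eval_Lp_other {μ : Fin n} (hμ : μ ≠ j) : eval (x μ) (Lp x j) = 0 := by
  simp [Lp, eval_qp_other j hμ]

lemma eval_derivative_qp :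
    eval (x j) (derivative (qp x j)) =
      ∑ ν ∈ univ.erase j, ∏ μ ∈ (univ.erase j).erase ν, (x j - x μ) := by
  rw [qp, derivative_prod_finset]
  simp [eval_finset_sum, eval_prod]

lemma eval_derivative_Lp (hx : Function.Injective x) :
    eval (x j) (derivative (Lp x j)) = cc x j := by
  rw [Lp, show derivative (C (dd x j)⁻¹ * qp x j) = C (dd x j)⁻¹ * derivative (qp x j) by
    simp [derivative_mul]]
  rw [eval_mul, eval_C, eval_derivative_qp, Finset.mul_sum, cc]
  refine Finset.sum_congr rfl fun ν hν => ?_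
  have h1 : dd x j = (x j - x ν) * ∏ μ ∈ (univ.erase j).erase ν, (x j - x μ) :=
    (Finset.mul_prod_erase _ _ hν).symm
  have h2 : (∏ μ ∈ (univ.erase j).erase ν, (x j - x μ)) ≠ 0 :=
    Finset.prod_ne_zero_iff.mpr fun μ hμ => sub_ne j hx (Finset.mem_of_mem_erase hμ)
  rw [h1, mul_inv]
  field_simp

lemma natDegree_qp_le : (qp x j).natDegree ≤ n - 1 := by
  refine le_trans (Polynomial.natDegree_prod_le _ _) (le_of_eq ?_)
  calc ∑ ν ∈ univ.erase j, (X - C (x ν)).natDegree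
      = ∑ _ν ∈ univ.erase j, 1 :=
        Finset.sum_congr rfl fun ν _ => Polynomial.natDegree_X_sub_C _
    _ = (univ.erase j).card := by simp
    _ = n - 1 := by rw [Finset.card_erase_of_mem (mem_univ _)]; simp

lemma natDegree_Lp_le : (Lp x j).natDegree ≤ n - 1 :=
  le_trans (Polynomial.natDegree_C_mul_le _ _) (natDegree_qp_le j)

lemma natDegree_Ap_le : (Ap x j).natDegree ≤ 1 := by
  refine le_trans (Polynomial.natDegree_sub_le _ _) ?_
  simp only [Polynomial.natDegree_one, max_le_iff]
  exact ⟨Nat.zero_le _, le_trans (Polynomial.natDegree_C_mul_le _ _)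
    (le_of_eq (Polynomial.natDegree_X_sub_C _))⟩

lemma natDegree_hp_lt (hn : 1 ≤ n) : (hp x j).natDegree < 2 * n := by
  have h1 := Polynomial.natDegree_mul_le (p := Ap x j) (q := Lp x j * Lp x j)
  have h2 := Polynomial.natDegree_mul_le (p := Lp x j) (q := Lp x j)
  have h3 := natDegree_Lp_le (x := x) j
  have h4 := natDegree_Ap_le (x := x) j
  rw [hp]
  omega

lemma natDegree_kp_lt (hn : 1 ≤ n) : (kp x j).natDegree < 2 * n := by
  have h1 := Polynomial.natDegree_mul_le (p := X - C (x j)) (q := Lp x j * Lp x j)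
  have h2 := Polynomial.natDegree_mul_le (p := Lp x j) (q := Lp x j)
  have h3 := natDegree_Lp_le (x := x) j
  have h4 : (X - C (x j)).natDegree = 1 := Polynomial.natDegree_X_sub_C _
  rw [kp]
  omega

lemma hp_self (hx : Function.Injective x) : eval (x j) (hp x j) = 1 := by
  simp [hp, Ap, eval_Lp_self j hx]

lemma hp_other (hx : Function.Injective x) {μ : Fin n} (hμ : μ ≠ j) :
    eval (x μ) (hp x j) = 0 := by
  simp [hp, eval_Lp_other j hμ]

lemma kp_eval (μ : Fin n) (hx : Function.Injective x) : eval (x μ) (kp x j) = 0 := by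
  by_cases h : μ = j
  · subst h; simp [kp]
  · simp [kp, eval_Lp_other j h]

lemma dhp_self (hx : Function.Injective x) : eval (x j) (derivative (hp x j)) = 0 := by
  simp only [hp, Ap, derivative_mul, derivative_sub, derivative_one, derivative_C,
    derivative_X, eval_mul, eval_add, eval_sub, eval_one, eval_C, eval_X,
    eval_Lp_self j hx, eval_derivative_Lp j hx, zero_sub, eval_neg, zero_mul, mul_one,
    sub_zero, zero_add, sub_self, mul_zero]
  ring

lemma dhp_other (hx : Function.Injective x) {μ : Fin n} (hμ : μ ≠ j) :
    eval (x μ) (derivative (hp x j)) = 0 := by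
  simp [hp, Ap, derivative_mul, eval_Lp_other j hμ]

lemma dkp_self (hx : Function.Injective x) : eval (x j) (derivative (kp x j)) = 1 := by
  simp [kp, derivative_mul, eval_Lp_self j hx]

lemma dkp_other (hx : Function.Injective x) {μ : Fin n} (hμ : μ ≠ j) :
    eval (x μ) (derivative (kp x j)) = 0 := by
  simp [kp, derivative_mul, eval_Lp_other j hμ]

end GautschiAux2

namespace GautschiAux3
open GautschiAux GautschiAux2 Polynomial Finset

variable {n : ℕ} {x : Fin n → ℂ} (j : Fin n)

lemma norm_cc_le : ‖cc x j‖ ≤ ∑ ν ∈ univ.erase j, ‖x ν - x j‖⁻¹ := by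
  refine le_trans (norm_sum_le _ _) (le_of_eq (Finset.sum_congr rfl fun ν _ => ?_))
  rw [norm_inv, norm_sub_rev]

lemma S_qq_le : S (qp x j * qp x j) ≤
    (∏ ν ∈ univ.erase j, (1 + ‖x ν‖)) * ∏ ν ∈ univ.erase j, (1 + ‖x ν‖) := by
  refine le_trans (S_prod_mul _ _ _) ?_
  exact mul_le_mul_of_nonneg_left (S_prod _ _) (Finset.prod_nonneg fun ν _ => by positivity)

lemma S_kp_le : S (kp x j) ≤ ‖(dd x j)⁻¹‖ * ‖(dd x j)⁻¹‖ *
    ((1 + ‖x j‖) *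
      ((∏ ν ∈ univ.erase j, (1 + ‖x ν‖)) * ∏ ν ∈ univ.erase j, (1 + ‖x ν‖))) := by
  have hkp : kp x j = C ((dd x j)⁻¹ * (dd x j)⁻¹) * ((X - C (x j)) * (qp x j * qp x j)) := by
    rw [kp, Lp]; simp only [C_mul, C_add, C_neg, C_1]; ring
  rw [hkp]
  calc S (C ((dd x j)⁻¹ * (dd x j)⁻¹) * ((X - C (x j)) * (qp x j * qp x j)))
      ≤ ‖(dd x j)⁻¹ * (dd x j)⁻¹‖ * S ((X - C (x j)) * (qp x j * qp x j)) := S_C_mul _ _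
    _ ≤ ‖(dd x j)⁻¹ * (dd x j)⁻¹‖ * ((1 + ‖x j‖) * S (qp x j * qp x j)) := by
        exact mul_le_mul_of_nonneg_left (S_X_sub_C_mul _ _) (norm_nonneg _)
    _ ≤ ‖(dd x j)⁻¹ * (dd x j)⁻¹‖ * ((1 + ‖x j‖) *
          ((∏ ν ∈ univ.erase j, (1 + ‖x ν‖)) * ∏ ν ∈ univ.erase j, (1 + ‖x ν‖))) := by
        refine mul_le_mul_of_nonneg_left ?_ (norm_nonneg _)
        exact mul_le_mul_of_nonneg_left (S_qq_le j) (by positivity)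
    _ = _ := by rw [norm_mul]

lemma S_hp_le : S (hp x j) ≤ ‖(dd x j)⁻¹‖ * ‖(dd x j)⁻¹‖ *
    ((‖2 * cc x j‖ + ‖1 + 2 * cc x j * x j‖) *
      ((∏ ν ∈ univ.erase j, (1 + ‖x ν‖)) * ∏ ν ∈ univ.erase j, (1 + ‖x ν‖))) := by
  have hhp : hp x j = C ((dd x j)⁻¹ * (dd x j)⁻¹) *
      ((C (-(2 * cc x j)) * X + C (1 + 2 * cc x j * x j)) * (qp x j * qp x j)) := by
    rw [hp, Ap, Lp]; simp only [C_mul, C_add, C_neg, C_1]; ring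
  rw [hhp]
  calc S (C ((dd x j)⁻¹ * (dd x j)⁻¹) *
        ((C (-(2 * cc x j)) * X + C (1 + 2 * cc x j * x j)) * (qp x j * qp x j)))
      ≤ ‖(dd x j)⁻¹ * (dd x j)⁻¹‖ *
        S ((C (-(2 * cc x j)) * X + C (1 + 2 * cc x j * x j)) * (qp x j * qp x j)) := S_C_mul _ _
    _ ≤ ‖(dd x j)⁻¹ * (dd x j)⁻¹‖ *
        ((‖-(2 * cc x j)‖ + ‖1 + 2 * cc x j * x j‖) * S (qp x j * qp x j)) := by
        exact mul_le_mul_of_nonneg_left (S_linear_mul _ _ _) (norm_nonneg _)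
    _ ≤ ‖(dd x j)⁻¹ * (dd x j)⁻¹‖ *
        ((‖-(2 * cc x j)‖ + ‖1 + 2 * cc x j * x j‖) *
          ((∏ ν ∈ univ.erase j, (1 + ‖x ν‖)) * ∏ ν ∈ univ.erase j, (1 + ‖x ν‖))) := by
        refine mul_le_mul_of_nonneg_left ?_ (norm_nonneg _)
        refine mul_le_mul_of_nonneg_left (S_qq_le j) (by positivity)
    _ = _ := by rw [norm_mul, norm_neg]

end GautschiAux3

namespace GautschiAux4
open GautschiAux GautschiAux2 GautschiAux3 Polynomial Finset

lemma sum_rowIdx {M : Type*} [AddCommMonoid M] (n : ℕ) (f : ℕ → M) :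
    ∑ s : Fin n ⊕ Fin n, f (rowIdx n s) = ∑ k ∈ range (2 * n), f k := by
  rw [Fintype.sum_sum_type]
  simp only [rowIdx, Sum.elim_inl, Sum.elim_inr]
  rw [Fin.sum_univ_eq_sum_range (fun k => f k), Fin.sum_univ_eq_sum_range (fun k => f (n + k)),
    two_mul, Finset.sum_range_add]

lemma sum_coeff_pow (p : Polynomial ℂ) (z : ℂ) {N : ℕ} (h : p.natDegree < N) :
    ∑ k ∈ range N, p.coeff k * z ^ k = eval z p :=
  (Polynomial.eval_eq_sum_range' h z).symm

lemma sum_coeff_deriv (p : Polynomial ℂ) (z : ℂ) {N : ℕ} (hN : 2 ≤ N)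
    (hp : p.natDegree ≤ N - 1) :
    ∑ k ∈ range N, p.coeff k * ((k : ℂ) * z ^ (k - 1)) = eval z (derivative p) := by
  obtain ⟨M, rfl⟩ : ∃ M, N = M + 1 := ⟨N - 1, by omega⟩
  have hM : 1 ≤ M := by omega
  have hd : (derivative p).natDegree < M := by
    have h1 := Polynomial.natDegree_derivative_le p
    omega
  rw [Polynomial.eval_eq_sum_range' hd, Finset.sum_range_succ']
  simp only [Nat.cast_zero, zero_mul, mul_zero, add_zero, Nat.add_sub_cancel]
  refine Finset.sum_congr rfl fun i _ => ?_
  rw [Polynomial.coeff_derivative]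
  push_cast
  ring

variable {n : ℕ} (x : Fin n → ℂ)

noncomputable def Bmat : Matrix (Fin n ⊕ Fin n) (Fin n ⊕ Fin n) ℂ :=
  fun r s => Sum.elim (fun j => (hp x j).coeff (rowIdx n s))
    (fun j => (kp x j).coeff (rowIdx n s)) r

lemma BU (hn : 1 ≤ n) (hx : Function.Injective x) : Bmat x * UconfSq n x = 1 := by
  have h2n : 2 ≤ 2 * n := by omega
  ext r c
  rw [Matrix.mul_apply]
  cases r with
  | inl j =>
    cases c with
    | inl j' =>
      have : ∑ s : Fin n ⊕ Fin n, Bmat x (Sum.inl j) s * UconfSq n x s (Sum.inl j') =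
          eval (x j') (hp x j) := by
        exact (sum_rowIdx n (fun k => (hp x j).coeff k * (x j') ^ k)).trans
          (sum_coeff_pow _ _ (natDegree_hp_lt j hn))
      rw [this]
      by_cases h : j' = j
      · subst h; rw [hp_self _ hx, Matrix.one_apply_eq]
      · rw [hp_other _ hx h, Matrix.one_apply_ne (by simp [Ne, Sum.inl.injEq, (Ne.symm h)])]
    | inr j' =>
      have : ∑ s : Fin n ⊕ Fin n, Bmat x (Sum.inl j) s * UconfSq n x s (Sum.inr j') =
          eval (x j') (derivative (hp x j)) := by
        exact (sum_rowIdx n (fun k => (hp x j).coeff k * ((k : ℂ) * (x j') ^ (k - 1)))).trans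
          (sum_coeff_deriv _ _ h2n (by have := natDegree_hp_lt (x := x) j hn; omega))
      rw [this]
      by_cases h : j' = j
      · subst h; rw [dhp_self _ hx, Matrix.one_apply_ne (by simp)]
      · rw [dhp_other _ hx h, Matrix.one_apply_ne (by simp)]
  | inr j =>
    cases c with
    | inl j' =>
      have : ∑ s : Fin n ⊕ Fin n, Bmat x (Sum.inr j) s * UconfSq n x s (Sum.inl j') =
          eval (x j') (kp x j) := by
        exact (sum_rowIdx n (fun k => (kp x j).coeff k * (x j') ^ k)).trans
          (sum_coeff_pow _ _ (natDegree_kp_lt j hn))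
      rw [this, kp_eval _ j' hx, Matrix.one_apply_ne (by simp)]
    | inr j' =>
      have : ∑ s : Fin n ⊕ Fin n, Bmat x (Sum.inr j) s * UconfSq n x s (Sum.inr j') =
          eval (x j') (derivative (kp x j)) := by
        exact (sum_rowIdx n (fun k => (kp x j).coeff k * ((k : ℂ) * (x j') ^ (k - 1)))).trans
          (sum_coeff_deriv _ _ h2n (by have := natDegree_kp_lt (x := x) j hn; omega))
      rw [this]
      by_cases h : j' = j
      · subst h; rw [dkp_self _ hx, Matrix.one_apply_eq]
      · rw [dkp_other _ hx h, Matrix.one_apply_ne (by simp [Ne, Sum.inr.injEq, (Ne.symm h)])]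

end GautschiAux4

namespace GautschiAux5
open GautschiAux GautschiAux2 GautschiAux3 GautschiAux4 Polynomial Finset

variable {n : ℕ} {x : Fin n → ℂ} (j : Fin n)

lemma subne' (hx : Function.Injective x) {v : Fin n} (hv : v ∈ univ.erase j) :
    x v - x j ≠ 0 :=
  sub_ne_zero.mpr fun h => (Finset.ne_of_mem_erase hv) (hx h)

lemma hD (hx : Function.Injective x) : (0:ℝ) < ∏ v ∈ univ.erase j, ‖x v - x j‖ :=
  Finset.prod_pos fun v hv => norm_pos_iff.mpr (subne' j hx hv)

lemma hE : ‖(dd x j)⁻¹‖ = (∏ v ∈ univ.erase j, ‖x v - x j‖)⁻¹ := by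
  rw [norm_inv, dd, norm_prod]
  congr 1
  exact Finset.prod_congr rfl fun v _ => norm_sub_rev _ _

lemma hprod : ∏ v ∈ univ.erase j, (1 + ‖x v‖) / ‖x v - x j‖ =
    (∏ v ∈ univ.erase j, (1 + ‖x v‖)) / ∏ v ∈ univ.erase j, ‖x v - x j‖ :=
  Finset.prod_div_distrib _ _

lemma S_kp_bound (hx : Function.Injective x) :
    S (kp x j) ≤
      max (1 + ‖x j‖)
          (1 + 2 * (1 + ‖x j‖) * ∑ v ∈ univ.erase j, ‖x v - x j‖⁻¹) *
        (∏ v ∈ univ.erase j, (1 + ‖x v‖) / ‖x v - x j‖) ^ 2 := by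
  set P := ∏ v ∈ univ.erase j, (1 + ‖x v‖) with hP
  set D := ∏ v ∈ univ.erase j, ‖x v - x j‖ with hDdef
  have hD' : (0:ℝ) < D := hD j hx
  calc S (kp x j) ≤ ‖(dd x j)⁻¹‖ * ‖(dd x j)⁻¹‖ * ((1 + ‖x j‖) * (P * P)) := S_kp_le j
    _ = (1 + ‖x j‖) * (P / D) ^ 2 := by rw [hE, ← hDdef, show (P/D)^2 = (P*D⁻¹)*(P*D⁻¹) by rw [div_eq_mul_inv]; ring]; ring
    _ ≤ max (1 + ‖x j‖) (1 + 2 * (1 + ‖x j‖) * ∑ v ∈ univ.erase j, ‖x v - x j‖⁻¹) *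
          (P / D) ^ 2 := mul_le_mul_of_nonneg_right (le_max_left _ _) (by positivity)
    _ = _ := by rw [hprod]

lemma S_hp_bound (hx : Function.Injective x) :
    S (hp x j) ≤
      max (1 + ‖x j‖)
          (1 + 2 * (1 + ‖x j‖) * ∑ v ∈ univ.erase j, ‖x v - x j‖⁻¹) *
        (∏ v ∈ univ.erase j, (1 + ‖x v‖) / ‖x v - x j‖) ^ 2 := by
  set P := ∏ v ∈ univ.erase j, (1 + ‖x v‖) with hP
  set D := ∏ v ∈ univ.erase j, ‖x v - x j‖ with hDdef
  have hD' : (0:ℝ) < D := hD j hx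
  have hF : ‖2 * cc x j‖ + ‖1 + 2 * cc x j * x j‖ ≤
      1 + 2 * (1 + ‖x j‖) * ∑ v ∈ univ.erase j, ‖x v - x j‖⁻¹ := by
    have h1 : ‖1 + 2 * cc x j * x j‖ ≤ 1 + 2 * ‖cc x j‖ * ‖x j‖ := by
      refine le_trans (norm_add_le _ _) ?_
      simp [norm_mul]
    have h2 : ‖2 * cc x j‖ = 2 * ‖cc x j‖ := by simp [norm_mul]
    have h3 := norm_cc_le (x := x) j
    have h4 : (0:ℝ) ≤ ∑ v ∈ univ.erase j, ‖x v - x j‖⁻¹ :=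
      Finset.sum_nonneg fun v _ => by positivity
    nlinarith [norm_nonneg (x j), norm_nonneg (cc x j)]
  calc S (hp x j) ≤ ‖(dd x j)⁻¹‖ * ‖(dd x j)⁻¹‖ *
        ((‖2 * cc x j‖ + ‖1 + 2 * cc x j * x j‖) * (P * P)) := S_hp_le j
    _ = (‖2 * cc x j‖ + ‖1 + 2 * cc x j * x j‖) * (P / D) ^ 2 := by
        rw [hE, ← hDdef, show (P/D)^2 = (P*D⁻¹)*(P*D⁻¹) by rw [div_eq_mul_inv]; ring]; ring
    _ ≤ max (1 + ‖x j‖) (1 + 2 * (1 + ‖x j‖) * ∑ v ∈ univ.erase j, ‖x v - x j‖⁻¹) *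
          (P / D) ^ 2 := by
        refine mul_le_mul_of_nonneg_right (le_trans hF (le_max_right _ _)) (by positivity)
    _ = _ := by rw [hprod]

end GautschiAux5

/-- Theorem (Gautschi): for pairwise distinct `x_1, …, x_n`, the confluent Vandermonde matrix
`𝐔_{2n}(x)` is invertible and, with
`b_λ = max(1 + |x_λ|, 1 + 2(1 + |x_λ|) Σ_{ν≠λ} 1/|x_ν - x_λ|)`, one has
`‖𝐔_{2n}(x)⁻¹‖_∞ ≤ max_λ b_λ (Π_{ν≠λ} (1 + |x_ν|)/|x_ν - x_λ|)²`. -/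
theorem gautschi_confluent_vandermonde_inverse_norm_bound
    (n : ℕ) (hn : 1 ≤ n) (x : Fin n → ℂ) (hx : Function.Injective x) :
    IsUnit (UconfSq n x).det ∧
      rowSumNorm (UconfSq n x)⁻¹ ≤
        ⨆ l : Fin n,
          max (1 + ‖x l‖)
              (1 + 2 * (1 + ‖x l‖) *
                ∑ v ∈ Finset.univ.erase l, ‖x v - x l‖⁻¹) *
            (∏ v ∈ Finset.univ.erase l,
              (1 + ‖x v‖) / ‖x v - x l‖) ^ 2 := by
  open GautschiAux GautschiAux2 GautschiAux3 GautschiAux4 GautschiAux5 in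
  refine ⟨Matrix.isUnit_det_of_left_inverse (BU x hn hx), ?_⟩
  rw [Matrix.inv_eq_left_inv (BU x hn hx), rowSumNorm]
  haveI : Nonempty (Fin n) := ⟨⟨0, hn⟩⟩
  have hbdd : BddAbove (Set.range fun l : Fin n =>
      max (1 + ‖x l‖)
          (1 + 2 * (1 + ‖x l‖) * ∑ v ∈ Finset.univ.erase l, ‖x v - x l‖⁻¹) *
        (∏ v ∈ Finset.univ.erase l, (1 + ‖x v‖) / ‖x v - x l‖) ^ 2) :=
    Set.Finite.bddAbove (Set.finite_range _)
  refine ciSup_le fun r => ?_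
  cases r with
  | inl j =>
    have hsum : ∑ s : Fin n ⊕ Fin n, ‖Bmat x (Sum.inl j) s‖ = S (hp x j) := by
      rw [S_eq_of_subset (Polynomial.supp_subset_range (natDegree_hp_lt j hn))]
      exact sum_rowIdx n fun k => ‖(hp x j).coeff k‖
    rw [hsum]
    exact le_trans (S_hp_bound j hx) (le_ciSup hbdd j)
  | inr j =>
    have hsum : ∑ s : Fin n ⊕ Fin n, ‖Bmat x (Sum.inr j) s‖ = S (kp x j) := by
      rw [S_eq_of_subset (Polynomial.supp_subset_range (natDegree_kp_lt j hn))]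
      exact sum_rowIdx n fun k => ‖(kp x j).coeff k‖
    rw [hsum]
    exact le_trans (S_kp_bound j hx) (le_ciSup hbdd j)
end
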